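/- arXiv:1306.5417 — 4 statements merged into one kernel-verified Lean document; each statement's English description precedes it below -/
import Mathlib

section
/- Let $n \geq 1$, let $\lambda_1,\dots,\lambda_n > 0$ with $\bar{\lambda} = \max_i \lambda_i$ and $\underline{\lambda} = \min_i \lambda_i$, and assume $2\underline{\lambda} < n$. Let $Y_1,\dots,Y_n$ be i.i.d. exponential random variables with rate $n$ and set $Z = \mathbf{1}_{\{\sum_{i=1}^n Y_i \leq 1\}} \cdot \prod_{i=1}^n \frac{\lambda_i e^{-\lambda_i Y_i}}{n e^{-n Y_i}}$. Then $\frac{\mathbb{E}[Z^2]}{(\mathbb{E}[Z])^2} \leq \sqrt{n}\, e^{2(\bar{\lambda} - \underline{\lambda}) + 1}$. -/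
open MeasureTheory ProbabilityTheory Real
open ENNReal Set Stirling

lemma lint_pi : ∀ (k : ℕ) (f : Fin k → ℝ → ℝ≥0∞), (∀ i, Measurable (f i)) →
    ∫⁻ y : Fin k → ℝ, ∏ i, f i (y i) = ∏ i, ∫⁻ x, f i x := by
  intro k
  induction k with
  | zero =>
    intro f hf
    simp only [Finset.univ_eq_empty, Finset.prod_empty, lintegral_one]
    rw [MeasureTheory.volume_pi, Measure.pi_of_empty]
    simp
  | succ k ih =>
    intro f hf
    have hmp := measurePreserving_piFinSuccAbove (fun _ : Fin (k+1) => (volume : Measure ℝ)) 0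
    set e := MeasurableEquiv.piFinSuccAbove (fun _ : Fin (k+1) => ℝ) 0 with he
    set g : (Fin k → ℝ) → ℝ≥0∞ := fun z => ∏ j, f (Fin.succ j) (z j) with hg
    have hgm : Measurable g :=
      Finset.measurable_prod _ fun j _ => (hf (Fin.succ j)).comp (measurable_pi_apply j)
    have hF : Measurable (fun p : ℝ × (Fin k → ℝ) => f 0 p.1 * g p.2) :=
      ((hf 0).comp measurable_fst).mul (hgm.comp measurable_snd)
    have key : ∫⁻ y : Fin (k+1) → ℝ, ∏ i, f i (y i) ∂(Measure.pi fun _ => volume)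
        = ∫⁻ p : ℝ × (Fin k → ℝ), f 0 p.1 * g p.2
            ∂((volume : Measure ℝ).prod (Measure.pi fun _ : Fin k => (volume : Measure ℝ))) := by
      rw [← hmp.lintegral_comp hF]
      apply lintegral_congr
      intro y
      rw [Fin.prod_univ_succ]
      simp only [he, hg, MeasurableEquiv.piFinSuccAbove, MeasurableEquiv.coe_mk,
        Fin.insertNthEquiv, Equiv.coe_fn_symm_mk, Fin.zero_succAbove, Fin.removeNth]
    rw [MeasureTheory.volume_pi, key,
      lintegral_prod_mul (hf 0).aemeasurable hgm.aemeasurable,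
      ← MeasureTheory.volume_pi]
    rw [hg]
    rw [ih _ (fun j => hf (Fin.succ j)), Fin.prod_univ_succ]

lemma pi_wd (k : ℕ) (f : ℝ → ℝ≥0∞) (hf : Measurable f)
    [SigmaFinite ((volume : Measure ℝ).withDensity f)] :
    Measure.pi (fun _ : Fin k => (volume : Measure ℝ).withDensity f)
      = (volume : Measure (Fin k → ℝ)).withDensity (fun y => ∏ i, f (y i)) := by
  apply Measure.pi_eq
  intro s hs
  rw [withDensity_apply _ (MeasurableSet.univ_pi hs),
    ← lintegral_indicator (MeasurableSet.univ_pi hs)]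
  have hpt : ∀ y : Fin k → ℝ, (Set.univ.pi s).indicator (fun y => ∏ i, f (y i)) y
      = ∏ i, (s i).indicator f (y i) := by
    intro y
    by_cases hy : y ∈ Set.univ.pi s
    · rw [Set.indicator_of_mem hy]
      exact Finset.prod_congr rfl fun i _ =>
        (Set.indicator_of_mem (hy i (Set.mem_univ i)) f).symm
    · rw [Set.indicator_of_notMem hy]
      simp only [Set.mem_pi, Set.mem_univ, forall_true_left, not_forall] at hy
      obtain ⟨i, hi⟩ := hy
      exact (Finset.prod_eq_zero (Finset.mem_univ i)
        (Set.indicator_of_notMem hi f)).symm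
  rw [lintegral_congr hpt, lint_pi k _ (fun i => hf.indicator (hs i))]
  exact Finset.prod_congr rfl fun i _ =>
    by rw [lintegral_indicator (hs i), withDensity_apply _ (hs i)]

lemma simplex_meas (k : ℕ) (t : ℝ) :
    MeasurableSet {y : Fin k → ℝ | (∀ i, 0 ≤ y i) ∧ ∑ i, y i ≤ t} := by
  have : {y : Fin k → ℝ | (∀ i, 0 ≤ y i) ∧ ∑ i, y i ≤ t}
      = (⋂ i, {y : Fin k → ℝ | 0 ≤ y i}) ∩ {y : Fin k → ℝ | ∑ i, y i ≤ t} := by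
    ext y; simp [Set.mem_iInter]
  rw [this]
  exact MeasurableSet.inter
    (MeasurableSet.iInter fun i => measurableSet_le measurable_const (measurable_pi_apply i))
    (measurableSet_le (Finset.measurable_sum _ fun i _ => measurable_pi_apply i)
      measurable_const)

lemma simplex_vol : ∀ (k : ℕ) (t : ℝ), 0 ≤ t →
    ENNReal.ofReal (t ^ k / (Nat.factorial k)) ≤
      volume {y : Fin k → ℝ | (∀ i, 0 ≤ y i) ∧ ∑ i, y i ≤ t} := by
  intro k
  induction k with
  | zero =>
    intro t ht
    have : {y : Fin 0 → ℝ | (∀ i, 0 ≤ y i) ∧ ∑ i, y i ≤ t} = Set.univ := by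
      ext y; simp [Finset.sum_empty, ht, Fin.forall_fin_zero_pi]
    rw [this]
    rw [MeasureTheory.volume_pi, Measure.pi_of_empty]
    simp
  | succ k ih =>
    intro t ht
    set S := {y : Fin (k+1) → ℝ | (∀ i, 0 ≤ y i) ∧ ∑ i, y i ≤ t} with hSdef
    have hS : MeasurableSet S := simplex_meas (k+1) t
    have hmp := MeasureTheory.volume_preserving_piFinSuccAbove (fun _ : Fin (k+1) => ℝ) 0
    set e := MeasurableEquiv.piFinSuccAbove (fun _ : Fin (k+1) => ℝ) 0 with he
    have hA : MeasurableSet (⇑e.symm ⁻¹' S) := e.symm.measurable hS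
    have hvol : volume S = volume (⇑e.symm ⁻¹' S) :=
      ((hmp.symm e).measure_preimage hS.nullMeasurableSet).symm
    rw [hvol, Measure.volume_eq_prod, Measure.prod_apply hA]
    have hslice : ∀ a : ℝ, a ∈ Set.Icc 0 t →
        {z : Fin k → ℝ | (∀ i, 0 ≤ z i) ∧ ∑ i, z i ≤ t - a} ⊆ Prod.mk a ⁻¹' (⇑e.symm ⁻¹' S) := by
      intro a ha z hz
      simp only [Set.mem_preimage, hSdef, Set.mem_setOf_eq, he,
        MeasurableEquiv.piFinSuccAbove_symm_apply, Fin.insertNthEquiv, Equiv.coe_fn_mk,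
        Fin.insertNth_zero, cast_eq]
      constructor
      · intro i
        refine Fin.cases ?_ ?_ i
        · simpa using ha.1
        · intro j; simpa using hz.1 j
      · rw [Fin.sum_cons]
        have := hz.2
        linarith
    calc ENNReal.ofReal (t ^ (k+1) / (Nat.factorial (k+1)))
        = ∫⁻ a, (Set.Icc 0 t).indicator
            (fun a => ENNReal.ofReal ((t - a) ^ k / (Nat.factorial k))) a := by
          rw [lintegral_indicator measurableSet_Icc]
          have hint : IntegrableOn (fun a : ℝ => (t - a) ^ k / (Nat.factorial k))
              (Set.Icc 0 t) volume :=
            (((continuous_const.sub continuous_id).pow k).div_const _).integrableOn_Icc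
          have hnn : 0 ≤ᶠ[ae (volume.restrict (Set.Icc 0 t))]
              (fun a : ℝ => (t - a) ^ k / (Nat.factorial k)) := by
            filter_upwards [self_mem_ae_restrict measurableSet_Icc] with a ha
            have : 0 ≤ t - a := by linarith [ha.2]
            positivity
          rw [← MeasureTheory.ofReal_integral_eq_lintegral_ofReal hint hnn]
          congr 1
          rw [MeasureTheory.integral_Icc_eq_integral_Ioc,
            ← intervalIntegral.integral_of_le ht]
          have : ∫ a in (0:ℝ)..t, (t - a) ^ k / (Nat.factorial k)
              = (∫ a in (0:ℝ)..t, (t - a) ^ k) / (Nat.factorial k) := by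
            rw [intervalIntegral.integral_div]
          rw [this, intervalIntegral.integral_comp_sub_left (fun x => x ^ k) t]
          simp only [sub_zero, sub_self]
          rw [integral_pow]
          rw [Nat.factorial_succ]
          push_cast
          field_simp
          try ring
      _ ≤ ∫⁻ a, volume (Prod.mk a ⁻¹' (⇑e.symm ⁻¹' S)) := by
          apply lintegral_mono
          intro a
          by_cases ha : a ∈ Set.Icc 0 t
          · rw [Set.indicator_of_mem ha]
            exact le_trans (ih (t - a) (by linarith [ha.2]))
              (measure_mono (hslice a ha))
          · rw [Set.indicator_of_notMem ha]; exact zero_le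

lemma fact_le_stirling (n : ℕ) (hn : 1 ≤ n) :
    (Nat.factorial n : ℝ) ≤ Real.sqrt n * n ^ n * Real.exp (1 - n) := by
  obtain ⟨m, rfl⟩ : ∃ m, n = m + 1 := ⟨n - 1, (Nat.succ_pred_eq_of_pos hn).symm⟩
  have h1 : Real.log (stirlingSeq (m + 1)) ≤ Real.log (stirlingSeq (0 + 1)) :=
    log_stirlingSeq'_antitone (Nat.zero_le m)
  have h2 : stirlingSeq (m + 1) ≤ stirlingSeq 1 := by
    have := Real.exp_le_exp.2 h1
    rwa [Real.exp_log (stirlingSeq'_pos m), Real.exp_log (stirlingSeq'_pos 0)] at this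
  rw [stirlingSeq_one] at h2
  set n := m + 1 with hn'
  have hnpos : (0:ℝ) < n := by positivity
  have hden : (0:ℝ) < Real.sqrt (2 * n) * (n / Real.exp 1) ^ n := by positivity
  have hfact : (Nat.factorial n : ℝ)
      = stirlingSeq n * (Real.sqrt (2 * n) * (n / Real.exp 1) ^ n) := by
    rw [stirlingSeq]
    field_simp
  rw [hfact]
  have hstep : stirlingSeq n * (Real.sqrt (2 * n) * (n / Real.exp 1) ^ n)
      ≤ (Real.exp 1 / Real.sqrt 2) * (Real.sqrt (2 * n) * (n / Real.exp 1) ^ n) :=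
    mul_le_mul_of_nonneg_right h2 (le_of_lt hden)
  refine hstep.trans (le_of_eq ?_)
  rw [Real.sqrt_mul (by norm_num : (0:ℝ) ≤ 2), div_pow, Real.exp_sub, Real.exp_one_pow]
  have h2pos : (0:ℝ) < Real.sqrt 2 := by positivity
  have hepos : (0:ℝ) < Real.exp 1 := Real.exp_pos 1
  have hen : (0:ℝ) < Real.exp n := Real.exp_pos n
  field_simp

lemma prod_ratio (n : ℕ) (hn : (0:ℝ) < n) (lam : Fin n → ℝ) (y : Fin n → ℝ) :
    ∏ i, (lam i * Real.exp (-(lam i) * y i)) / ((n : ℝ) * Real.exp (-(n : ℝ) * y i))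
      = ((∏ i, lam i) / (n:ℝ) ^ n) * Real.exp (∑ i, ((n:ℝ) - lam i) * y i) := by
  rw [Finset.prod_div_distrib, Finset.prod_mul_distrib, Finset.prod_mul_distrib,
    Finset.prod_const, ← Real.exp_sum, ← Real.exp_sum, Finset.card_univ, Fintype.card_fin,
    mul_div_mul_comm, ← Real.exp_sub, ← Finset.sum_sub_distrib]
  congr 2
  exact Finset.sum_congr rfl fun i _ => by ring

lemma prod_pdf (n : ℕ) (y : Fin n → ℝ) :
    ∏ i, ((n:ℝ) * Real.exp (-((n:ℝ) * y i)))
      = (n:ℝ) ^ n * Real.exp (∑ i, -((n:ℝ) * y i)) := by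
  rw [Finset.prod_mul_distrib, Finset.prod_const, ← Real.exp_sum, Finset.card_univ,
    Fintype.card_fin]


/-- **Bounded relative efficiency of the importance-sampling estimator.**
If `Y i ~ Exp(n)` are i.i.d., `lamBar = max lamᵢ`, `lamMin = min lamᵢ`, `2 lamMin < n`, and
`Z = 1_{∑ Yᵢ ≤ 1} · ∏ (lamᵢ e^{-lamᵢ Yᵢ}) / (n e^{-n Yᵢ})`, then
`E[Z²] / (E[Z])² ≤ √n · e^{2(lamBar - lamMin) + 1}`. -/
theorem is_estimator_efficiency
    {Ω : Type*} [MeasureSpace Ω] [IsProbabilityMeasure (ℙ : Measure Ω)]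
    (n : ℕ) (hn : 1 ≤ n) (lam : Fin n → ℝ) (hlam : ∀ i, 0 < lam i)
    (lamBar lamMin : ℝ)
    (hBar : IsGreatest (Set.range lam) lamBar)
    (hMin : IsLeast (Set.range lam) lamMin)
    (h2 : 2 * lamMin < n)
    (Y : Fin n → Ω → ℝ)
    (hYmeas : ∀ i, Measurable (Y i))
    (hYindep : iIndepFun Y ℙ)
    (hYdist : ∀ i, Measure.map (Y i) ℙ = expMeasure n)
    (Z : Ω → ℝ)
    (hZ : Z = fun ω => (if ∑ i, Y i ω ≤ 1 then (1 : ℝ) else 0) *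
      ∏ i, (lam i * Real.exp (-(lam i) * Y i ω)) / ((n : ℝ) * Real.exp (-(n : ℝ) * Y i ω))) :
    (∫ ω, (Z ω) ^ 2 ∂ℙ) / (∫ ω, Z ω ∂ℙ) ^ 2 ≤
      Real.sqrt n * Real.exp (2 * (lamBar - lamMin) + 1) := by
  have hn0 : (0:ℝ) < n := by exact_mod_cast hn
  -- basic facts about lamBar, lamMin
  obtain ⟨iB, hiB⟩ := hBar.1
  obtain ⟨iM, hiM⟩ := hMin.1
  have hBarpos : 0 < lamBar := hiB ▸ hlam iB
  have hMinpos : 0 < lamMin := hiM ▸ hlam iM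
  have hle : ∀ i, lam i ≤ lamBar := fun i => hBar.2 ⟨i, rfl⟩
  have hge : ∀ i, lamMin ≤ lam i := fun i => hMin.2 ⟨i, rfl⟩
  -- setup
  haveI hprob : IsProbabilityMeasure (expMeasure (n:ℝ)) := isProbabilityMeasure_expMeasure hn0
  set ν : Measure ℝ := expMeasure (n:ℝ) with hν
  set φ : Ω → (Fin n → ℝ) := fun ω i => Y i ω with hφdef
  have hφ : Measurable φ := measurable_pi_lambda _ hYmeas
  set g : (Fin n → ℝ) → ℝ := fun y => (if ∑ i, y i ≤ 1 then (1 : ℝ) else 0) *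
      ∏ i, (lam i * Real.exp (-(lam i) * y i)) / ((n : ℝ) * Real.exp (-(n : ℝ) * y i)) with hgdef
  have hsum_meas : Measurable (fun y : Fin n → ℝ => ∑ i, y i) :=
    Finset.measurable_sum _ fun i _ => measurable_pi_apply i
  have hgm : Measurable g := by
    apply Measurable.mul
    · exact Measurable.ite (measurableSet_le hsum_meas measurable_const)
        measurable_const measurable_const
    · exact Finset.measurable_prod _ fun i _ =>
        (measurable_const.mul (by fun_prop)).div
          (measurable_const.mul (by fun_prop))
  have hZg : Z = fun ω => g (φ ω) := hZ
  have hZnn : ∀ ω, 0 ≤ Z ω := by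
    intro ω; rw [hZg]
    apply mul_nonneg
    · split <;> norm_num
    · exact Finset.prod_nonneg fun i _ => div_nonneg
        (mul_nonneg (hlam i).le (Real.exp_pos _).le)
        (mul_nonneg hn0.le (Real.exp_pos _).le)
  -- map to pi measure
  have hmap : Measure.map φ ℙ = Measure.pi (fun _ : Fin n => ν) := by
    refine (Measure.pi_eq fun s hs => ?_).symm
    rw [Measure.map_apply hφ (MeasurableSet.univ_pi hs)]
    have hpre : φ ⁻¹' (Set.univ.pi s) = ⋂ i, Y i ⁻¹' s i := by
      ext ω; simp [hφdef, Set.mem_pi]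
    rw [hpre, hYindep.meas_iInter (fun i => ⟨s i, hs i, rfl⟩)]
    exact Finset.prod_congr rfl fun i _ => by
      rw [← Measure.map_apply (hYmeas i) (hs i), hYdist i]
  -- pi measure as density
  have hexp_wd : ν = (volume : Measure ℝ).withDensity (exponentialPDF (n:ℝ)) := rfl
  have hpdfm : Measurable (exponentialPDF (n:ℝ)) :=
    (measurable_exponentialPDFReal (n:ℝ)).ennreal_ofReal
  haveI : SigmaFinite ((volume : Measure ℝ).withDensity (exponentialPDF (n:ℝ))) := by
    rw [← hexp_wd]; infer_instance
  set D : (Fin n → ℝ) → ℝ≥0∞ := fun y => ∏ i, exponentialPDF (n:ℝ) (y i) with hDdef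
  have hDm : Measurable D :=
    Finset.measurable_prod _ fun i _ => hpdfm.comp (measurable_pi_apply i)
  have hpi : Measure.pi (fun _ : Fin n => ν) = (volume : Measure (Fin n → ℝ)).withDensity D := by
    rw [hexp_wd]; exact pi_wd n _ hpdfm
  -- the simplex set
  set A : Set (Fin n → ℝ) := {y : Fin n → ℝ | (∀ i, 0 ≤ y i) ∧ ∑ i, y i ≤ 1} with hAdef
  have hA : MeasurableSet A := simplex_meas n 1
  set V : ℝ≥0∞ := volume A with hVdef
  have VL : ENNReal.ofReal (1 / (Nat.factorial n : ℝ)) ≤ V := by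
    have := simplex_vol n 1 zero_le_one
    simpa using this
  have VU : V ≤ 1 := by
    have hsub : A ⊆ Set.univ.pi (fun _ : Fin n => Set.Icc (0:ℝ) 1) := by
      intro y hy i _
      exact ⟨hy.1 i, le_trans (Finset.single_le_sum (fun j _ => hy.1 j) (Finset.mem_univ i)) hy.2⟩
    calc V ≤ volume (Set.univ.pi (fun _ : Fin n => Set.Icc (0:ℝ) 1)) := measure_mono hsub
      _ = 1 := by rw [volume_pi_pi]; simp [Real.volume_Icc]
  have hVne : V ≠ ⊤ := (lt_of_le_of_lt VU ENNReal.one_lt_top).ne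
  -- constants
  set c : ℝ := ∏ i, lam i with hcdef
  have hc : 0 < c := Finset.prod_pos fun i _ => hlam i
  set K₁ : ℝ := c * Real.exp (-lamBar) with hK₁def
  set K₂ : ℝ := c ^ 2 / (n:ℝ) ^ n * Real.exp ((n:ℝ) - 2 * lamMin) with hK₂def
  have hK₁ : 0 < K₁ := mul_pos hc (Real.exp_pos _)
  have hK₂ : 0 < K₂ := mul_pos (by positivity) (Real.exp_pos _)
  -- pointwise bounds
  have hcore : ∀ y : Fin n → ℝ, y ∈ A →
      (∏ i, ((n:ℝ) * Real.exp (-((n:ℝ) * y i)))) * g y = c * Real.exp (∑ i, -(lam i * y i))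
      ∧ K₁ ≤ (∏ i, ((n:ℝ) * Real.exp (-((n:ℝ) * y i)))) * g y
      ∧ (∏ i, ((n:ℝ) * Real.exp (-((n:ℝ) * y i)))) * g y ≤ c
      ∧ (∏ i, ((n:ℝ) * Real.exp (-((n:ℝ) * y i)))) * (g y) ^ 2 ≤ K₂ := by
    intro y hy
    obtain ⟨hy1, hy2⟩ := hy
    have hgy : g y = (c / (n:ℝ) ^ n) * Real.exp (∑ i, ((n:ℝ) - lam i) * y i) := by
      rw [hgdef]; simp only [if_pos hy2, one_mul]; exact prod_ratio n hn0 lam y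
    have hprod : (∏ i, ((n:ℝ) * Real.exp (-((n:ℝ) * y i))))
        = (n:ℝ) ^ n * Real.exp (∑ i, -((n:ℝ) * y i)) := prod_pdf n y
    have hnn : ((n:ℝ) ^ n) ≠ 0 := by positivity
    have hsumexp : Real.exp (∑ i, -((n:ℝ) * y i)) * Real.exp (∑ i, ((n:ℝ) - lam i) * y i)
        = Real.exp (∑ i, -(lam i * y i)) := by
      rw [← Real.exp_add, ← Finset.sum_add_distrib]
      exact congrArg Real.exp (Finset.sum_congr rfl fun i _ => by ring)
    have hid : (∏ i, ((n:ℝ) * Real.exp (-((n:ℝ) * y i)))) * g y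
        = c * Real.exp (∑ i, -(lam i * y i)) := by
      rw [hprod, hgy, ← hsumexp]
      field_simp
    have hsum_nonneg : 0 ≤ ∑ i, y i := Finset.sum_nonneg fun i _ => hy1 i
    refine ⟨hid, ?_, ?_, ?_⟩
    · rw [hid, hK₁def]
      apply mul_le_mul_of_nonneg_left _ hc.le
      apply Real.exp_le_exp.2
      have : ∑ i, lam i * y i ≤ lamBar := by
        calc ∑ i, lam i * y i ≤ ∑ i, lamBar * y i :=
              Finset.sum_le_sum fun i _ => mul_le_mul_of_nonneg_right (hle i) (hy1 i)
          _ = lamBar * ∑ i, y i := by rw [Finset.mul_sum]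
          _ ≤ lamBar * 1 := mul_le_mul_of_nonneg_left hy2 hBarpos.le
          _ = lamBar := mul_one _
      have hneg : ∑ i, -(lam i * y i) = -(∑ i, lam i * y i) := by
        simp
      rw [hneg]
      linarith
    · rw [hid]
      calc c * Real.exp (∑ i, -(lam i * y i)) ≤ c * Real.exp 0 := by
            apply mul_le_mul_of_nonneg_left _ hc.le
            apply Real.exp_le_exp.2
            apply Finset.sum_nonpos fun i _ => ?_
            simp only [neg_nonpos]
            exact mul_nonneg (hlam i).le (hy1 i)
        _ = c := by rw [Real.exp_zero, mul_one]
    · have hsum2 : Real.exp (∑ i, -(lam i * y i)) * Real.exp (∑ i, ((n:ℝ) - lam i) * y i)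
          = Real.exp (∑ i, ((n:ℝ) - 2 * lam i) * y i) := by
        rw [← Real.exp_add, ← Finset.sum_add_distrib]
        exact congrArg Real.exp (Finset.sum_congr rfl fun i _ => by ring)
      have e1 : (∏ i, ((n:ℝ) * Real.exp (-((n:ℝ) * y i)))) * (g y) ^ 2
          = c ^ 2 / (n:ℝ) ^ n * Real.exp (∑ i, ((n:ℝ) - 2 * lam i) * y i) := by
        rw [sq, ← mul_assoc, hid, hgy, ← hsum2]; ring
      rw [e1, hK₂def]
      apply mul_le_mul_of_nonneg_left _ (by positivity)
      apply Real.exp_le_exp.2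
      calc ∑ i, ((n:ℝ) - 2 * lam i) * y i ≤ ∑ i, ((n:ℝ) - 2 * lamMin) * y i :=
            Finset.sum_le_sum fun i _ =>
              mul_le_mul_of_nonneg_right (by linarith [hge i]) (hy1 i)
        _ = ((n:ℝ) - 2 * lamMin) * ∑ i, y i := by rw [Finset.mul_sum]
        _ ≤ ((n:ℝ) - 2 * lamMin) * 1 := mul_le_mul_of_nonneg_left hy2 (by linarith)
        _ = (n:ℝ) - 2 * lamMin := mul_one _
  -- D on A
  have hDval : ∀ y : Fin n → ℝ, (∀ i, 0 ≤ y i) →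
      D y = ENNReal.ofReal (∏ i, ((n:ℝ) * Real.exp (-((n:ℝ) * y i)))) := by
    intro y hy1
    rw [hDdef, ENNReal.ofReal_prod_of_nonneg
      (fun i _ => mul_nonneg hn0.le (Real.exp_pos _).le)]
    exact Finset.prod_congr rfl fun i _ => exponentialPDF_of_nonneg (hy1 i)
  have hgnn : ∀ y, 0 ≤ g y := by
    intro y; rw [hgdef]
    apply mul_nonneg
    · split <;> norm_num
    · exact Finset.prod_nonneg fun i _ => div_nonneg
        (mul_nonneg (hlam i).le (Real.exp_pos _).le)
        (mul_nonneg hn0.le (Real.exp_pos _).le)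
  have hDzero : ∀ y : Fin n → ℝ, ¬ (∀ i, 0 ≤ y i) → D y = 0 := by
    intro y hy
    push_neg at hy
    obtain ⟨i, hi⟩ := hy
    exact Finset.prod_eq_zero (Finset.mem_univ i) (exponentialPDF_of_neg hi)
  have hgzero : ∀ y : Fin n → ℝ, ¬ (∑ i, y i ≤ 1) → g y = 0 := by
    intro y hy
    rw [hgdef]
    simp only [if_neg hy, zero_mul]
  -- the three lintegral pointwise bounds
  have hb2 : ∀ y : Fin n → ℝ, D y * ENNReal.ofReal ((g y) ^ 2)
      ≤ A.indicator (fun _ => ENNReal.ofReal K₂) y := by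
    intro y
    by_cases hy1 : ∀ i, 0 ≤ y i
    · by_cases hy2 : ∑ i, y i ≤ 1
      · have hyA : y ∈ A := ⟨hy1, hy2⟩
        rw [Set.indicator_of_mem hyA, hDval y hy1,
          ← ENNReal.ofReal_mul (Finset.prod_nonneg fun i _ =>
            mul_nonneg hn0.le (Real.exp_pos _).le)]
        exact ENNReal.ofReal_le_ofReal (hcore y hyA).2.2.2
      · rw [hgzero y hy2]
        simp
    · rw [hDzero y hy1]
      simp
  have hb1 : ∀ y : Fin n → ℝ, A.indicator (fun _ => ENNReal.ofReal K₁) y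
      ≤ D y * ENNReal.ofReal (g y) := by
    intro y
    by_cases hyA : y ∈ A
    · rw [Set.indicator_of_mem hyA, hDval y hyA.1,
        ← ENNReal.ofReal_mul (Finset.prod_nonneg fun i _ =>
          mul_nonneg hn0.le (Real.exp_pos _).le)]
      exact ENNReal.ofReal_le_ofReal (hcore y hyA).2.1
    · rw [Set.indicator_of_notMem hyA]
      exact zero_le
  have hb3 : ∀ y : Fin n → ℝ, D y * ENNReal.ofReal (g y)
      ≤ A.indicator (fun _ => ENNReal.ofReal c) y := by
    intro y
    by_cases hy1 : ∀ i, 0 ≤ y i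
    · by_cases hy2 : ∑ i, y i ≤ 1
      · have hyA : y ∈ A := ⟨hy1, hy2⟩
        rw [Set.indicator_of_mem hyA, hDval y hy1,
          ← ENNReal.ofReal_mul (Finset.prod_nonneg fun i _ =>
            mul_nonneg hn0.le (Real.exp_pos _).le)]
        exact ENNReal.ofReal_le_ofReal (hcore y hyA).2.2.1
      · rw [hgzero y hy2]; simp
    · rw [hDzero y hy1]; simp
  -- convert integrals
  set N : ℝ≥0∞ := ∫⁻ y, D y * ENNReal.ofReal ((g y) ^ 2) ∂(volume : Measure (Fin n → ℝ)) with hNdef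
  set Dn : ℝ≥0∞ := ∫⁻ y, D y * ENNReal.ofReal (g y) ∂(volume : Measure (Fin n → ℝ)) with hDndef
  have hgm2 : Measurable fun y => ENNReal.ofReal ((g y) ^ 2) :=
    ((hgm.pow_const 2)).ennreal_ofReal
  have hgm1 : Measurable fun y => ENNReal.ofReal (g y) := hgm.ennreal_ofReal
  have hIZ2 : ∫ ω, (Z ω) ^ 2 ∂ℙ = N.toReal := by
    rw [integral_eq_lintegral_of_nonneg_ae (Filter.Eventually.of_forall fun ω => sq_nonneg (Z ω))
      (((hgm.comp hφ).pow_const 2).aestronglyMeasurable.congr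
        (Filter.Eventually.of_forall fun ω => by rw [hZg]; rfl))]
    congr 1
    calc ∫⁻ ω, ENNReal.ofReal ((Z ω) ^ 2) ∂ℙ
        = ∫⁻ ω, (fun y => ENNReal.ofReal ((g y) ^ 2)) (φ ω) ∂ℙ := by
          apply lintegral_congr; intro ω; rw [hZg]
      _ = ∫⁻ y, ENNReal.ofReal ((g y) ^ 2) ∂(Measure.map φ ℙ) := (lintegral_map hgm2 hφ).symm
      _ = ∫⁻ y, (D * fun y => ENNReal.ofReal ((g y) ^ 2)) y ∂(volume : Measure (Fin n → ℝ)) := by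
          rw [hmap, hpi, lintegral_withDensity_eq_lintegral_mul _ hDm hgm2]
      _ = N := by rw [hNdef]; apply lintegral_congr; intro y; simp [Pi.mul_apply]
  have hIZ : ∫ ω, Z ω ∂ℙ = Dn.toReal := by
    rw [integral_eq_lintegral_of_nonneg_ae (Filter.Eventually.of_forall hZnn)
      ((hgm.comp hφ).aestronglyMeasurable.congr
        (Filter.Eventually.of_forall fun ω => by rw [hZg]; rfl))]
    congr 1
    calc ∫⁻ ω, ENNReal.ofReal (Z ω) ∂ℙ
        = ∫⁻ ω, (fun y => ENNReal.ofReal (g y)) (φ ω) ∂ℙ := by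
          apply lintegral_congr; intro ω; rw [hZg]
      _ = ∫⁻ y, ENNReal.ofReal (g y) ∂(Measure.map φ ℙ) := (lintegral_map hgm1 hφ).symm
      _ = ∫⁻ y, (D * fun y => ENNReal.ofReal (g y)) y ∂(volume : Measure (Fin n → ℝ)) := by
          rw [hmap, hpi, lintegral_withDensity_eq_lintegral_mul _ hDm hgm1]
      _ = Dn := by rw [hDndef]; apply lintegral_congr; intro y; simp [Pi.mul_apply]
  -- lintegral bounds
  have hNle : N ≤ ENNReal.ofReal K₂ * V := by
    calc N ≤ ∫⁻ y, A.indicator (fun _ => ENNReal.ofReal K₂) y ∂(volume : Measure (Fin n → ℝ)) :=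
          lintegral_mono hb2
      _ = ENNReal.ofReal K₂ * V := by
          rw [lintegral_indicator hA, setLIntegral_const]
  have hDnge : ENNReal.ofReal K₁ * V ≤ Dn := by
    calc ENNReal.ofReal K₁ * V
        = ∫⁻ y, A.indicator (fun _ => ENNReal.ofReal K₁) y ∂(volume : Measure (Fin n → ℝ)) := by
          rw [lintegral_indicator hA, setLIntegral_const]
      _ ≤ Dn := lintegral_mono hb1
  have hDnle : Dn ≤ ENNReal.ofReal c * V := by
    calc Dn ≤ ∫⁻ y, A.indicator (fun _ => ENNReal.ofReal c) y ∂(volume : Measure (Fin n → ℝ)) :=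
          lintegral_mono hb3
      _ = ENNReal.ofReal c * V := by rw [lintegral_indicator hA, setLIntegral_const]
  have hDnne : Dn ≠ ⊤ :=
    (lt_of_le_of_lt hDnle (ENNReal.mul_lt_top ENNReal.ofReal_lt_top hVne.lt_top)).ne
  -- real versions
  set v : ℝ := V.toReal with hvdef
  have hvle : 1 / (Nat.factorial n : ℝ) ≤ v := by
    have := ENNReal.toReal_mono hVne VL
    rwa [ENNReal.toReal_ofReal (by positivity)] at this
  have hvpos : 0 < v := lt_of_lt_of_le (by positivity) hvle
  have hble : K₁ * v ≤ Dn.toReal := by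
    have := ENNReal.toReal_mono hDnne hDnge
    rwa [ENNReal.toReal_mul, ENNReal.toReal_ofReal hK₁.le] at this
  have hale : N.toReal ≤ K₂ * v := by
    have hne : ENNReal.ofReal K₂ * V ≠ ⊤ :=
      (ENNReal.mul_lt_top ENNReal.ofReal_lt_top hVne.lt_top).ne
    have := ENNReal.toReal_mono hne hNle
    rwa [ENNReal.toReal_mul, ENNReal.toReal_ofReal hK₂.le] at this
  rw [hIZ2, hIZ]
  have hbpos : 0 < Dn.toReal := lt_of_lt_of_le (mul_pos hK₁ hvpos) hble
  have hKv : 0 < K₁ * v := mul_pos hK₁ hvpos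
  calc N.toReal / Dn.toReal ^ 2
      ≤ (K₂ * v) / ((K₁ * v) ^ 2) :=
        div_le_div₀ (by positivity) hale (by positivity)
          (pow_le_pow_left₀ hKv.le hble 2)
    _ = K₂ / (K₁ ^ 2 * v) := by field_simp
    _ ≤ K₂ / (K₁ ^ 2 * (1 / (Nat.factorial n : ℝ))) := by
        apply div_le_div_of_nonneg_left hK₂.le (by positivity)
        exact mul_le_mul_of_nonneg_left hvle (by positivity)
    _ = K₂ * (Nat.factorial n : ℝ) / K₁ ^ 2 := by
        rw [div_mul_eq_div_div]
        field_simp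
    _ ≤ Real.sqrt n * Real.exp (2 * (lamBar - lamMin) + 1) := by
        have hKK : K₂ * (Nat.factorial n : ℝ) / K₁ ^ 2
            = (Nat.factorial n : ℝ) * Real.exp ((n:ℝ) - 2 * lamMin + 2 * lamBar) / (n:ℝ) ^ n := by
          have h1 : Real.exp ((n:ℝ) - 2 * lamMin)
              = Real.exp ((n:ℝ) - 2 * lamMin + 2 * lamBar) * Real.exp (-lamBar + -lamBar) := by
            rw [← Real.exp_add]; congr 1; ring
          rw [hK₁def, hK₂def, mul_pow, sq (Real.exp (-lamBar)), ← Real.exp_add, h1]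
          have hcne : c ≠ 0 := hc.ne'
          have hnne : ((n:ℝ) ^ n) ≠ 0 := by positivity
          have hene : Real.exp (-lamBar + -lamBar) ≠ 0 := (Real.exp_pos _).ne'
          field_simp
        rw [hKK]
        have hst := fact_le_stirling n hn
        have hexp_pos : 0 < Real.exp ((n:ℝ) - 2 * lamMin + 2 * lamBar) := Real.exp_pos _
        calc (Nat.factorial n : ℝ) * Real.exp ((n:ℝ) - 2 * lamMin + 2 * lamBar) / (n:ℝ) ^ n
            ≤ (Real.sqrt n * (n:ℝ) ^ n * Real.exp (1 - (n:ℝ)))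
                * Real.exp ((n:ℝ) - 2 * lamMin + 2 * lamBar) / (n:ℝ) ^ n := by
              apply div_le_div_of_nonneg_right ?_ (by positivity)
              exact mul_le_mul_of_nonneg_right hst hexp_pos.le
          _ = Real.sqrt n * Real.exp (2 * (lamBar - lamMin) + 1) := by
              have h2 : Real.exp (1 - (n:ℝ)) * Real.exp ((n:ℝ) - 2 * lamMin + 2 * lamBar)
                  = Real.exp (2 * (lamBar - lamMin) + 1) := by
                rw [← Real.exp_add]; congr 1; ring
              have hnne : ((n:ℝ) ^ n) ≠ 0 := by positivity
              rw [← h2]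
              field_simp
end

section
/- Let $n \geq 1$, let $\lambda_1,\dots,\lambda_n > 0$ with $\bar{\lambda} = \max_i \lambda_i$ and $\underline{\lambda} = \min_i \lambda_i$, and assume $2\underline{\lambda} < n$. Let $Z_1,\dots,Z_N$ be i.i.d. copies of the estimator $Z = \mathbf{1}_{\{\sum_{i=1}^n Y_i \leq 1\}} \cdot \prod_{i=1}^n \frac{\lambda_i e^{-\lambda_i Y_i}}{n e^{-n Y_i}}$ (with $Y_1,\dots,Y_n$ i.i.d. $\mathrm{Exp}(n)$), and set $\hat{\ell} = \frac{1}{N}\sum_{j=1}^N Z_j$. Then the relative error $RE = \sqrt{\mathrm{Var}(\hat{\ell})}/\mathbb{E}[\hat{\ell}]$ satisfies $RE \leq \sqrt{\frac{\sqrt{n}\, e^{2(\bar{\lambda} - \underline{\lambda}) + 1}}{N}}$. -/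
open MeasureTheory ProbabilityTheory Real

open scoped ENNReal NNReal

noncomputable def Jfun (r t : ℝ) (k : ℕ) : (Fin k → ℝ) → ℝ≥0∞ := fun y =>
  if (∀ i, 0 ≤ y i) ∧ ∑ i, y i ≤ t then ENNReal.ofReal (Real.exp (r * ∑ i, y i)) else 0

lemma Jfun_measurable (r t : ℝ) (k : ℕ) : Measurable (Jfun r t k) := by
  unfold Jfun
  have hsum : Measurable (fun y : Fin k → ℝ => ∑ i, y i) := by
    exact Finset.measurable_sum _ fun i _ => measurable_pi_apply i
  have hset : MeasurableSet {y : Fin k → ℝ | (∀ i, 0 ≤ y i) ∧ ∑ i, y i ≤ t} := by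
    apply MeasurableSet.inter
    · have : {y : Fin k → ℝ | ∀ i, 0 ≤ y i} = ⋂ i, {y : Fin k → ℝ | 0 ≤ y i} := by
        ext y; simp
      show MeasurableSet {y : Fin k → ℝ | ∀ i, 0 ≤ y i}
      rw [this]
      exact MeasurableSet.iInter fun i =>
        measurableSet_le measurable_const (measurable_pi_apply i)
    · exact measurableSet_le hsum measurable_const
  exact Measurable.ite hset
    (ENNReal.measurable_ofReal.comp ((hsum.const_mul r).exp)) measurable_const

lemma Jfun_of_neg {r t : ℝ} (ht : t < 0) (k : ℕ) (y : Fin k → ℝ) : Jfun r t k y = 0 := by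
  unfold Jfun
  rw [if_neg]
  rintro ⟨h1, h2⟩
  have : 0 ≤ ∑ i, y i := Finset.sum_nonneg fun i _ => h1 i
  linarith

lemma expMeasure_lintegral {r : ℝ} (hr : 0 < r) {f : ℝ → ℝ≥0∞} (hf : Measurable f) :
    ∫⁻ x, f x ∂(expMeasure r) = ∫⁻ x, gammaPDF 1 r x * f x := by
  have hm : Measurable (gammaPDF 1 r) := (measurable_gammaPDFReal 1 r).ennreal_ofReal
  rw [expMeasure, gammaMeasure, lintegral_withDensity_eq_lintegral_mul _ hm hf]
  rfl

lemma gammaPDF_one_eq {r x : ℝ} (hx : 0 ≤ x) :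
    gammaPDF 1 r x = ENNReal.ofReal (r * Real.exp (-(r * x))) := by
  rw [gammaPDF_of_nonneg hx]
  norm_num [Real.Gamma_one, Real.rpow_one, Real.rpow_zero]

lemma Jlem {r : ℝ} (hr : 0 < r) (k : ℕ) : ∀ (t : ℝ), 0 ≤ t →
    ∫⁻ y, Jfun r t k y ∂(Measure.pi fun _ : Fin k => expMeasure r)
      = ENNReal.ofReal (r ^ k * t ^ k / k.factorial) := by
  haveI : IsProbabilityMeasure (expMeasure r) := isProbabilityMeasure_expMeasure hr
  induction k with
  | zero =>
    intro t ht
    have h1 : ∀ y : Fin 0 → ℝ, Jfun r t 0 y = 1 := by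
      intro y
      unfold Jfun
      rw [if_pos ⟨fun i => i.elim0, by simpa using ht⟩]
      simp
    simp only [h1]
    simp
  | succ k ih =>
    intro t ht
    set μ := expMeasure r with hμ
    set πk := Measure.pi fun _ : Fin k => μ with hπk
    set e := MeasurableEquiv.piFinSuccAbove (fun _ : Fin (k+1) => ℝ) 0 with he
    have hmp : MeasurePreserving e (Measure.pi fun _ : Fin (k+1) => μ)
        (μ.prod πk) := measurePreserving_piFinSuccAbove (fun _ : Fin (k+1) => μ) 0
    have hstep : ∫⁻ y, Jfun r t (k+1) y ∂(Measure.pi fun _ : Fin (k+1) => μ)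
        = ∫⁻ p : ℝ × (Fin k → ℝ), Jfun r t (k+1) (e.symm p) ∂(μ.prod πk) :=
      ((hmp.symm e).lintegral_comp (Jfun_measurable r t (k+1))).symm
    have hkey : ∀ (x : ℝ) (z : Fin k → ℝ), Jfun r t (k+1) (e.symm (x, z))
        = (if 0 ≤ x then ENNReal.ofReal (Real.exp (r * x)) else 0) * Jfun r (t - x) k z := by
      intro x z
      have hsymm : e.symm (x, z) = Fin.cons (α := fun _ : Fin (k+1) => ℝ) x z := by
        rw [he]
        simp [MeasurableEquiv.piFinSuccAbove, Fin.insertNthEquiv]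
      rw [hsymm]
      unfold Jfun
      have hall : (∀ i, 0 ≤ Fin.cons (α := fun _ : Fin (k+1) => ℝ) x z i) ↔ (0 ≤ x ∧ ∀ j, 0 ≤ z j) := by
        rw [Fin.forall_fin_succ]
        simp
      have hsum : ∑ i, Fin.cons (α := fun _ : Fin (k+1) => ℝ) x z i = x + ∑ j, z j := Fin.sum_cons x z
      by_cases h1 : 0 ≤ x
      · by_cases h2 : ∀ j, 0 ≤ z j
        · by_cases h3 : x + ∑ j, z j ≤ t
          · rw [if_pos ⟨hall.mpr ⟨h1, h2⟩, by rw [hsum]; exact h3⟩, if_pos h1,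
              if_pos ⟨h2, by linarith⟩, hsum, ← ENNReal.ofReal_mul (Real.exp_nonneg _),
              ← Real.exp_add, mul_add]
          · rw [if_neg, if_pos h1, if_neg, mul_zero]
            · rintro ⟨_, hs⟩; exact h3 (by linarith)
            · rintro ⟨ha, hs⟩; rw [hsum] at hs; exact h3 hs
        · have hnc : ¬((∀ i, 0 ≤ Fin.cons (α := fun _ : Fin (k+1) => ℝ) x z i)
              ∧ ∑ i, Fin.cons (α := fun _ : Fin (k+1) => ℝ) x z i ≤ t) :=
            fun hc => h2 fun j => (hall.mp hc.1).2 j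
          have hnz : ¬((∀ i, 0 ≤ z i) ∧ ∑ i, z i ≤ t - x) := fun hc => h2 hc.1
          rw [if_neg hnc, if_pos h1, if_neg hnz, mul_zero]
      · rw [if_neg, if_neg h1, zero_mul]
        rintro ⟨ha, _⟩; exact h1 (hall.mp ha).1
    have hinner : ∀ x : ℝ, ∫⁻ z, Jfun r t (k+1) (e.symm (x, z)) ∂πk
        = Set.indicator (Set.Icc 0 t)
          (fun x => ENNReal.ofReal (Real.exp (r*x) * (r^k * (t-x)^k / k.factorial))) x := by
      intro x
      simp only [hkey]
      rw [lintegral_const_mul _ (Jfun_measurable r (t-x) k)]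
      by_cases h1 : 0 ≤ x
      · by_cases h2 : x ≤ t
        · rw [Set.indicator_of_mem (Set.mem_Icc.mpr ⟨h1, h2⟩), if_pos h1, ih (t-x) (by linarith),
            ← ENNReal.ofReal_mul (Real.exp_nonneg _)]
        · have hneg : t - x < 0 := by linarith
          have h0 : ∫⁻ z, Jfun r (t-x) k z ∂πk = 0 := by
            simp [Jfun_of_neg hneg]
          rw [Set.indicator_of_notMem (fun hc => h2 hc.2), h0, mul_zero]
      · rw [Set.indicator_of_notMem (fun hc => h1 hc.1), if_neg h1, zero_mul]
    have hFmeas : Measurable (Set.indicator (Set.Icc (0:ℝ) t)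
        (fun x => ENNReal.ofReal (Real.exp (r*x) * (r^k * (t-x)^k / k.factorial)))) := by
      apply Measurable.indicator _ measurableSet_Icc
      apply Measurable.ennreal_ofReal
      fun_prop
    rw [hstep, lintegral_prod (fun p => Jfun r t (k+1) (e.symm p)) (((Jfun_measurable r t (k+1)).comp e.symm.measurable).aemeasurable)]
    simp only [hinner]
    rw [hμ, expMeasure_lintegral hr hFmeas]
    have hprod : ∀ x : ℝ, gammaPDF 1 r x * Set.indicator (Set.Icc (0:ℝ) t)
        (fun x => ENNReal.ofReal (Real.exp (r*x) * (r^k * (t-x)^k / k.factorial))) x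
        = Set.indicator (Set.Icc (0:ℝ) t)
          (fun x => ENNReal.ofReal (r^(k+1) * (t-x)^k / k.factorial)) x := by
      intro x
      by_cases hx : x ∈ Set.Icc (0:ℝ) t
      · rw [Set.indicator_of_mem hx, Set.indicator_of_mem hx, gammaPDF_one_eq hx.1,
          ← ENNReal.ofReal_mul (by positivity)]
        congr 1
        rw [Real.exp_neg]
        field_simp
        ring
      · rw [Set.indicator_of_notMem hx, Set.indicator_of_notMem hx, mul_zero]
    simp only [hprod]
    rw [lintegral_indicator measurableSet_Icc]
    have hint : IntegrableOn (fun x => r^(k+1) * (t-x)^k / (k.factorial : ℝ)) (Set.Icc 0 t) := by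
      apply Continuous.integrableOn_Icc
      fun_prop
    have hnn : 0 ≤ᵐ[volume.restrict (Set.Icc 0 t)]
        fun x => r^(k+1) * (t-x)^k / (k.factorial : ℝ) := by
      filter_upwards [ae_restrict_mem measurableSet_Icc] with x hx
      have h2 := hx.2
      have : 0 ≤ t - x := by linarith
      positivity
    rw [← ofReal_integral_eq_lintegral_ofReal hint hnn]
    have hcalc : ∫ x in Set.Icc 0 t, r^(k+1) * (t-x)^k / (k.factorial : ℝ)
        = r^(k+1) * t^(k+1) / ((k+1).factorial : ℝ) := by
      rw [integral_Icc_eq_integral_Ioc, ← intervalIntegral.integral_of_le ht]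
      have heq : (fun x => r^(k+1) * (t-x)^k / (k.factorial : ℝ))
          = fun x => (r^(k+1) / (k.factorial : ℝ)) * ((fun y => y^k) (t - x)) := by
        funext x; ring
      rw [heq, intervalIntegral.integral_const_mul,
        intervalIntegral.integral_comp_sub_left (fun y => y^k) t]
      simp only [sub_self, sub_zero]
      rw [integral_pow]
      rw [Nat.factorial_succ]
      push_cast
      field_simp
      ring_nf
    rw [hcalc]

lemma expMeasure_neg {r : ℝ} : expMeasure r (Set.Iio 0) = 0 := by
  rw [expMeasure, gammaMeasure, withDensity_apply _ measurableSet_Iio]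
  exact lintegral_gammaPDF_of_nonpos le_rfl

lemma map_iid_pi {Ω : Type*} [MeasureSpace Ω] [IsProbabilityMeasure (ℙ : Measure Ω)]
    {n : ℕ} (Y : Fin n → Ω → ℝ) (hYmeas : ∀ i, Measurable (Y i))
    (hYindep : iIndepFun Y ℙ)
    {ν : Fin n → Measure ℝ} [∀ i, IsProbabilityMeasure (ν i)]
    (hYdist : ∀ i, Measure.map (Y i) ℙ = ν i) :
    Measure.map (fun ω i => Y i ω) ℙ = Measure.pi ν := by
  refine (Measure.pi_eq fun s hs => ?_).symm
  rw [Measure.map_apply (measurable_pi_lambda _ hYmeas) (MeasurableSet.univ_pi hs)]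
  have hpre : (fun ω i => Y i ω) ⁻¹' (Set.pi Set.univ s) = ⋂ i ∈ Finset.univ, Y i ⁻¹' s i := by
    ext ω; simp [Set.mem_pi]
  rw [hpre, hYindep.measure_inter_preimage_eq_mul Finset.univ (fun i _ => hs i)]
  exact Finset.prod_congr rfl fun i _ => by
    rw [← hYdist i, Measure.map_apply (hYmeas i) (hs i)]

lemma stirling_bound (n : ℕ) (hn : 1 ≤ n) :
    (n.factorial : ℝ) ≤ Real.exp 1 * Real.sqrt n * ((n : ℝ) / Real.exp 1) ^ n := by
  have h1 : Stirling.stirlingSeq n ≤ Stirling.stirlingSeq 1 := by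
    obtain ⟨m, rfl⟩ := Nat.exists_eq_add_of_le hn
    simpa [Nat.add_comm] using Stirling.stirlingSeq'_antitone (Nat.zero_le m)
  rw [Stirling.stirlingSeq_one] at h1
  have hn0 : (0:ℝ) < n := by exact_mod_cast hn
  have hpos : (0:ℝ) < Real.sqrt (2 * n) * ((n : ℝ) / Real.exp 1) ^ n := by positivity
  have hd : (n.factorial : ℝ)
      = Stirling.stirlingSeq n * (Real.sqrt (2 * n) * ((n : ℝ) / Real.exp 1) ^ n) := by
    rw [Stirling.stirlingSeq]
    field_simp
  rw [hd]
  have h2 : Stirling.stirlingSeq n * (Real.sqrt (2 * n) * ((n : ℝ) / Real.exp 1) ^ n)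
      ≤ Real.exp 1 / Real.sqrt 2 * (Real.sqrt (2 * n) * ((n : ℝ) / Real.exp 1) ^ n) :=
    mul_le_mul_of_nonneg_right h1 hpos.le
  refine h2.trans (le_of_eq ?_)
  rw [show (2 * (n:ℝ)) = 2 * (n:ℝ) by ring, Real.sqrt_mul (by norm_num : (0:ℝ) ≤ 2)]
  have hs2 : Real.sqrt 2 ≠ 0 := by positivity
  field_simp

/-- **Bounded relative error of the importance-sampling algorithm.**
If `Zs 1, …, Zs N` are i.i.d. copies of the estimator
`Z = 1_{∑ Yᵢ ≤ 1} · ∏ (lamᵢ e^{-lamᵢ Yᵢ}) / (n e^{-n Yᵢ})` (with `Y i ~ Exp(n)` i.i.d.),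
and `ℓhat` is their sample mean, then the relative error
`RE = √(Var ℓhat) / E[ℓhat]` satisfies `RE ≤ √(√n e^{2(lamBar - lamMin) + 1} / N)`. -/
theorem is_algorithm_relative_error
    {Ω : Type*} [MeasureSpace Ω] [IsProbabilityMeasure (ℙ : Measure Ω)]
    (n : ℕ) (hn : 1 ≤ n) (lam : Fin n → ℝ) (hlam : ∀ i, 0 < lam i)
    (lamBar lamMin : ℝ)
    (hBar : IsGreatest (Set.range lam) lamBar)
    (hMin : IsLeast (Set.range lam) lamMin)
    (h2 : 2 * lamMin < n)
    (Y : Fin n → Ω → ℝ)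
    (hYmeas : ∀ i, Measurable (Y i))
    (hYindep : iIndepFun Y ℙ)
    (hYdist : ∀ i, Measure.map (Y i) ℙ = expMeasure n)
    (Z : Ω → ℝ)
    (hZ : Z = fun ω => (if ∑ i, Y i ω ≤ 1 then (1 : ℝ) else 0) *
      ∏ i, (lam i * Real.exp (-(lam i) * Y i ω)) / ((n : ℝ) * Real.exp (-(n : ℝ) * Y i ω)))
    (N : ℕ) (hN : 1 ≤ N)
    (Zs : Fin N → Ω → ℝ)
    (hZsmeas : ∀ j, Measurable (Zs j))
    (hZsindep : iIndepFun Zs ℙ)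
    (hZsdist : ∀ j, Measure.map (Zs j) ℙ = Measure.map Z ℙ)
    (ellHat : Ω → ℝ)
    (hellHat : ellHat = fun ω => (1 / (N : ℝ)) * ∑ j, Zs j ω)
    (RE : ℝ)
    (hRE : RE = Real.sqrt (variance ellHat ℙ) / (∫ ω, ellHat ω ∂ℙ)) :
    RE ≤ Real.sqrt (Real.sqrt n * Real.exp (2 * (lamBar - lamMin) + 1) / N) := by
  classical
  obtain ⟨iB, hiB⟩ := hBar.1
  obtain ⟨iM, hiM⟩ := hMin.1
  have hlamBar_pos : 0 < lamBar := hiB ▸ hlam iB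
  have hlamMin_pos : 0 < lamMin := hiM ▸ hlam iM
  have hle_Bar : ∀ i, lam i ≤ lamBar := fun i => hBar.2 ⟨i, rfl⟩
  have hMin_le : ∀ i, lamMin ≤ lam i := fun i => hMin.2 ⟨i, rfl⟩
  have hnR : (0:ℝ) < n := by exact_mod_cast hn
  haveI hPM : IsProbabilityMeasure (expMeasure (n:ℝ)) := isProbabilityMeasure_expMeasure hnR
  set pm := Measure.pi fun _ : Fin n => expMeasure (n : ℝ) with hpm
  haveI : IsProbabilityMeasure pm := by rw [hpm]; infer_instance
  have hmap : Measure.map (fun ω i => Y i ω) ℙ = pm := map_iid_pi Y hYmeas hYindep hYdist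
  set g : (Fin n → ℝ) → ℝ := fun y => (if ∑ i, y i ≤ 1 then (1:ℝ) else 0) *
    ∏ i, (lam i * Real.exp (-(lam i) * y i)) / ((n:ℝ) * Real.exp (-(n:ℝ) * y i)) with hgdef
  have hgm : Measurable g := by
    apply Measurable.mul
    · exact Measurable.ite (measurableSet_le
        (Finset.measurable_sum _ fun i _ => measurable_pi_apply i) measurable_const)
        measurable_const measurable_const
    · apply Finset.measurable_prod
      intro i _
      apply Measurable.div
      · fun_prop
      · fun_prop
  have hZeq : Z = fun ω => g (fun i => Y i ω) := by rw [hZ]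
  have hW : Measurable fun ω (i : Fin n) => Y i ω := measurable_pi_lambda _ hYmeas
  have hZm : Measurable Z := by rw [hZeq]; exact hgm.comp hW
  have hgnn : ∀ y, 0 ≤ g y := by
    intro y
    rw [hgdef]
    apply mul_nonneg
    · split <;> norm_num
    · exact Finset.prod_nonneg fun i _ => div_nonneg
        (mul_nonneg (hlam i).le (Real.exp_nonneg _)) (mul_nonneg hnR.le (Real.exp_nonneg _))
  set c1 : ℝ := ∏ i, lam i / (n:ℝ) with hc1def
  have hc1 : 0 < c1 := Finset.prod_pos fun i _ => div_pos (hlam i) hnR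
  have hprod_eq : ∀ y : Fin n → ℝ,
      (∏ i, (lam i * Real.exp (-(lam i) * y i)) / ((n:ℝ) * Real.exp (-(n:ℝ) * y i)))
        = c1 * Real.exp (∑ i, ((n:ℝ) - lam i) * y i) := by
    intro y
    have hfac : ∀ i : Fin n, (lam i * Real.exp (-(lam i) * y i)) / ((n:ℝ) * Real.exp (-(n:ℝ) * y i))
        = (lam i / n) * Real.exp (((n:ℝ) - lam i) * y i) := by
      intro i
      rw [mul_div_mul_comm, ← Real.exp_sub]
      congr 2
      ring
    rw [Finset.prod_congr rfl fun i _ => hfac i, Finset.prod_mul_distrib, ← Real.exp_sum]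
  set V : ℝ := (n:ℝ)^n / n.factorial with hVdef
  have hV : 0 < V := by positivity
  set a : ℝ := c1 * Real.exp (-lamBar) with hadef
  set b : ℝ := c1^2 * Real.exp ((n:ℝ) - 2*lamMin) with hbdef
  have ha : 0 < a := by positivity
  have hb : 0 < b := by positivity
  have hJn : ∫⁻ y, Jfun (n:ℝ) 1 n y ∂pm = ENNReal.ofReal V := by
    have := Jlem hnR n 1 zero_le_one
    rw [hpm]
    simpa using this
  -- sum facts
  have hsum_expand : ∀ y : Fin n → ℝ,
      ∑ i, ((n:ℝ) - lam i) * y i = (n:ℝ) * ∑ i, y i - ∑ i, lam i * y i := by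
    intro y
    rw [Finset.mul_sum, ← Finset.sum_sub_distrib]
    exact Finset.sum_congr rfl fun i _ => by ring
  -- lower pointwise bound
  have P1 : ∀ y : Fin n → ℝ, ENNReal.ofReal a * Jfun (n:ℝ) 1 n y ≤ ENNReal.ofReal (g y) := by
    intro y
    unfold Jfun
    by_cases hc : (∀ i, 0 ≤ y i) ∧ ∑ i, y i ≤ 1
    · rw [if_pos hc, ← ENNReal.ofReal_mul ha.le]
      apply ENNReal.ofReal_le_ofReal
      rw [hgdef]
      simp only
      rw [if_pos hc.2, one_mul, hprod_eq y, hadef]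
      have h1 : ∑ i, lam i * y i ≤ ∑ i, lamBar * y i :=
        Finset.sum_le_sum fun i _ => mul_le_mul_of_nonneg_right (hle_Bar i) (hc.1 i)
      have h2 : ∑ i, lamBar * y i = lamBar * ∑ i, y i := by rw [← Finset.mul_sum]
      have h3 : lamBar * ∑ i, y i ≤ lamBar := mul_le_of_le_one_right hlamBar_pos.le hc.2
      have hexp : -lamBar + (n:ℝ) * ∑ i, y i ≤ ∑ i, ((n:ℝ) - lam i) * y i := by
        rw [hsum_expand y]; linarith
      calc c1 * Real.exp (-lamBar) * Real.exp ((n:ℝ) * ∑ i, y i)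
          = c1 * Real.exp (-lamBar + (n:ℝ) * ∑ i, y i) := by rw [Real.exp_add]; ring
        _ ≤ c1 * Real.exp (∑ i, ((n:ℝ) - lam i) * y i) :=
            mul_le_mul_of_nonneg_left (Real.exp_le_exp.mpr hexp) hc1.le
    · rw [if_neg hc, mul_zero]
      exact zero_le
  -- upper pointwise bounds (assuming coordinates nonneg)
  have P2 : ∀ y : Fin n → ℝ, (∀ i, 0 ≤ y i) →
      ENNReal.ofReal (g y ^ 2) ≤ ENNReal.ofReal b * Jfun (n:ℝ) 1 n y := by
    intro y hy
    by_cases hs : ∑ i, y i ≤ 1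
    · have hcond : (∀ i, 0 ≤ y i) ∧ ∑ i, y i ≤ 1 := ⟨hy, hs⟩
      unfold Jfun
      rw [if_pos hcond, ← ENNReal.ofReal_mul hb.le]
      apply ENNReal.ofReal_le_ofReal
      rw [hgdef]
      simp only
      rw [if_pos hs, one_mul, hprod_eq y, hbdef]
      have h1 : lamMin * ∑ i, y i ≤ ∑ i, lam i * y i := by
        rw [Finset.mul_sum]
        exact Finset.sum_le_sum fun i _ => mul_le_mul_of_nonneg_right (hMin_le i) (hy i)
      have h0 : 0 ≤ ∑ i, y i := Finset.sum_nonneg fun i _ => hy i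
      have h4 : ((n:ℝ) - 2*lamMin) * ∑ i, y i ≤ (n:ℝ) - 2*lamMin :=
        mul_le_of_le_one_right (by linarith) hs
      have hexp : 2 * ∑ i, ((n:ℝ) - lam i) * y i
          ≤ (n:ℝ) - 2*lamMin + (n:ℝ) * ∑ i, y i := by
        rw [hsum_expand y]; nlinarith
      calc (c1 * Real.exp (∑ i, ((n:ℝ) - lam i) * y i))^2
          = c1^2 * Real.exp (2 * ∑ i, ((n:ℝ) - lam i) * y i) := by
            rw [mul_pow, ← Real.exp_nat_mul]; norm_num
        _ ≤ c1^2 * Real.exp ((n:ℝ) - 2*lamMin + (n:ℝ) * ∑ i, y i) := by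
            exact mul_le_mul_of_nonneg_left (Real.exp_le_exp.mpr hexp) (by positivity)
        _ = c1^2 * Real.exp ((n:ℝ) - 2*lamMin) * Real.exp ((n:ℝ) * ∑ i, y i) := by
            rw [Real.exp_add]; ring
    · have hgy : g y = 0 := by rw [hgdef]; simp only; rw [if_neg hs, zero_mul]
      rw [hgy]
      simpa using zero_le
  set C : ℝ := c1 * Real.exp (n:ℝ) with hCdef
  have hC : 0 < C := by positivity
  have hgC : ∀ y : Fin n → ℝ, (∀ i, 0 ≤ y i) → g y ≤ C := by
    intro y hy
    rw [hgdef]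
    simp only
    by_cases hs : ∑ i, y i ≤ 1
    · rw [if_pos hs, one_mul, hprod_eq y, hCdef]
      apply mul_le_mul_of_nonneg_left _ hc1.le
      apply Real.exp_le_exp.mpr
      rw [hsum_expand y]
      have h0 : 0 ≤ ∑ i, lam i * y i :=
        Finset.sum_nonneg fun i _ => mul_nonneg (hlam i).le (hy i)
      have : (n:ℝ) * ∑ i, y i ≤ (n:ℝ) := mul_le_of_le_one_right hnR.le hs
      linarith
    · rw [if_neg hs, zero_mul]; exact hC.le
  -- ae nonneg coordinates under pm
  have hae_pos : ∀ᵐ y ∂pm, ∀ i, 0 ≤ y i := by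
    rw [ae_all_iff]
    intro i
    rw [ae_iff]
    have hsub : {y : Fin n → ℝ | ¬ 0 ≤ y i} ⊆ Set.pi Set.univ
        (Function.update (fun _ : Fin n => (Set.univ : Set ℝ)) i (Set.Iio 0)) := by
      intro y hy j _
      rcases eq_or_ne j i with rfl | hji
      · simpa [Function.update_self] using lt_of_not_ge hy
      · simp [Function.update_of_ne hji]
    apply measure_mono_null hsub
    rw [hpm, Measure.pi_pi]
    apply Finset.prod_eq_zero (Finset.mem_univ i)
    simp [Function.update_self, expMeasure_neg]
  -- integral identities
  have hEZ : ∫ ω, Z ω ∂ℙ = (∫⁻ y, ENNReal.ofReal (g y) ∂pm).toReal := by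
    rw [hZeq, ← hmap, ← integral_map hW.aemeasurable hgm.aestronglyMeasurable,
      integral_eq_lintegral_of_nonneg_ae (ae_of_all _ hgnn) hgm.aestronglyMeasurable]
  have hg2m : Measurable fun y => g y ^ 2 := hgm.pow_const 2
  have hEZ2 : ∫ ω, Z ω ^ 2 ∂ℙ = (∫⁻ y, ENNReal.ofReal (g y ^ 2) ∂pm).toReal := by
    rw [hZeq]
    have hcomp : (fun ω => g (fun i => Y i ω) ^ 2)
        = fun ω => (fun y => g y ^ 2) ((fun ω (i : Fin n) => Y i ω) ω) := rfl
    rw [hcomp, ← hmap, ← integral_map hW.aemeasurable hg2m.aestronglyMeasurable,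
      integral_eq_lintegral_of_nonneg_ae (ae_of_all _ fun y => sq_nonneg (g y))
      hg2m.aestronglyMeasurable]
  -- lintegral bounds
  have hI1_lower : ENNReal.ofReal (a * V) ≤ ∫⁻ y, ENNReal.ofReal (g y) ∂pm := by
    rw [ENNReal.ofReal_mul ha.le, ← hJn, ← lintegral_const_mul _ (Jfun_measurable _ _ _)]
    exact lintegral_mono P1
  have hI1_upper : ∫⁻ y, ENNReal.ofReal (g y) ∂pm ≤ ENNReal.ofReal C := by
    calc ∫⁻ y, ENNReal.ofReal (g y) ∂pm ≤ ∫⁻ _, ENNReal.ofReal C ∂pm := by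
          apply lintegral_mono_ae
          filter_upwards [hae_pos] with y hy
          exact ENNReal.ofReal_le_ofReal (hgC y hy)
      _ = ENNReal.ofReal C := by simp
  have hI2_upper : ∫⁻ y, ENNReal.ofReal (g y ^ 2) ∂pm ≤ ENNReal.ofReal (b * V) := by
    calc ∫⁻ y, ENNReal.ofReal (g y ^ 2) ∂pm
        ≤ ∫⁻ y, ENNReal.ofReal b * Jfun (n:ℝ) 1 n y ∂pm := by
          apply lintegral_mono_ae
          filter_upwards [hae_pos] with y hy
          exact P2 y hy
      _ = ENNReal.ofReal b * ENNReal.ofReal V := by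
          rw [lintegral_const_mul _ (Jfun_measurable _ _ _), hJn]
      _ = ENNReal.ofReal (b * V) := (ENNReal.ofReal_mul hb.le).symm
  have hI1top : ∫⁻ y, ENNReal.ofReal (g y) ∂pm ≠ ⊤ :=
    (hI1_upper.trans_lt ENNReal.ofReal_lt_top).ne
  have hl_lb : a * V ≤ ∫ ω, Z ω ∂ℙ := by
    rw [hEZ]
    calc a * V = (ENNReal.ofReal (a * V)).toReal := by
          rw [ENNReal.toReal_ofReal (by positivity)]
      _ ≤ (∫⁻ y, ENNReal.ofReal (g y) ∂pm).toReal := ENNReal.toReal_mono hI1top hI1_lower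
  have hl_pos : 0 < ∫ ω, Z ω ∂ℙ := lt_of_lt_of_le (by positivity) hl_lb
  have hEZ2_ub : ∫ ω, Z ω ^ 2 ∂ℙ ≤ b * V := by
    rw [hEZ2]
    calc (∫⁻ y, ENNReal.ofReal (g y ^ 2) ∂pm).toReal
        ≤ (ENNReal.ofReal (b * V)).toReal := ENNReal.toReal_mono ENNReal.ofReal_ne_top hI2_upper
      _ = b * V := ENNReal.toReal_ofReal (by positivity)
  -- stirling / key ratio
  set K : ℝ := Real.sqrt n * Real.exp (2 * (lamBar - lamMin) + 1) with hKdef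
  have hK : 0 < K := by
    have : (0:ℝ) < Real.sqrt n := Real.sqrt_pos.mpr hnR
    positivity
  have hV_lb : Real.exp ((n:ℝ) - 1) / Real.sqrt n ≤ V := by
    have hst := stirling_bound n hn
    have hpow : ((n:ℝ) / Real.exp 1) ^ n = (n:ℝ)^n / Real.exp n := by
      rw [div_pow]
      congr 1
      rw [← Real.exp_nat_mul, mul_one]
    rw [hpow] at hst
    have hsq : (0:ℝ) < Real.sqrt n := Real.sqrt_pos.mpr hnR
    have hf : (0:ℝ) < n.factorial := by exact_mod_cast n.factorial_pos
    rw [hVdef, div_le_div_iff₀ hsq hf]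
    calc Real.exp ((n:ℝ) - 1) * n.factorial
        ≤ Real.exp ((n:ℝ) - 1) * (Real.exp 1 * Real.sqrt n * ((n:ℝ)^n / Real.exp n)) :=
          mul_le_mul_of_nonneg_left hst (Real.exp_nonneg _)
      _ = (Real.exp ((n:ℝ) - 1) * Real.exp 1 / Real.exp n) * (Real.sqrt n * (n:ℝ)^n) := by
          ring
      _ = (n:ℝ)^n * Real.sqrt n := by
          rw [← Real.exp_add]
          simp
          ring
  have hmain : Real.exp ((n:ℝ) - 2*lamMin + 2*lamBar) ≤ K * V := by
    have hsq : (0:ℝ) < Real.sqrt n := Real.sqrt_pos.mpr hnR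
    have hh : Real.exp ((n:ℝ) - 1) ≤ V * Real.sqrt n := (div_le_iff₀ hsq).mp hV_lb
    calc Real.exp ((n:ℝ) - 2*lamMin + 2*lamBar)
        = Real.exp (2*(lamBar - lamMin) + 1) * Real.exp ((n:ℝ) - 1) := by
          rw [← Real.exp_add]; congr 1; ring
      _ ≤ Real.exp (2*(lamBar - lamMin) + 1) * (V * Real.sqrt n) :=
          mul_le_mul_of_nonneg_left hh (Real.exp_nonneg _)
      _ = K * V := by rw [hKdef]; ring
  have hkey : b * V ≤ K * (a * V)^2 := by
    have hpos : (0:ℝ) ≤ c1^2 * Real.exp (-2*lamBar) * V := by positivity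
    have hmul := mul_le_mul_of_nonneg_left hmain hpos
    have he : Real.exp (-2*lamBar) * Real.exp ((n:ℝ) - 2*lamMin + 2*lamBar)
        = Real.exp ((n:ℝ) - 2*lamMin) := by
      rw [← Real.exp_add]; congr 1; ring
    have ha2 : a^2 = c1^2 * Real.exp (-2*lamBar) := by
      rw [hadef, mul_pow, ← Real.exp_nat_mul]
      norm_num
    calc b * V = c1^2 * (Real.exp (-2*lamBar) * Real.exp ((n:ℝ) - 2*lamMin + 2*lamBar)) * V := by
          rw [he, hbdef]
      _ = c1^2 * Real.exp (-2*lamBar) * V * Real.exp ((n:ℝ) - 2*lamMin + 2*lamBar) := by ring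
      _ ≤ c1^2 * Real.exp (-2*lamBar) * V * (K * V) := hmul
      _ = K * a^2 * V^2 := by rw [ha2]; ring
      _ = K * (a * V)^2 := by ring
  -- variance bound for Z
  have hVarZ_exp : variance Z ℙ ≤ ∫ ω, Z ω ^ 2 ∂ℙ := by
    have h := variance_le_expectation_sq (μ := ℙ) (X := Z) hZm.aestronglyMeasurable
    simpa [Pi.pow_apply] using h
  have hVarZK : variance Z ℙ ≤ K * (∫ ω, Z ω ∂ℙ)^2 := by
    refine hVarZ_exp.trans (hEZ2_ub.trans (hkey.trans ?_))
    exact mul_le_mul_of_nonneg_left (pow_le_pow_left₀ (by positivity) hl_lb 2) hK.le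
  -- a.s. bounds and L² membership
  have hYae : ∀ᵐ ω ∂ℙ, ∀ i, 0 ≤ Y i ω := by
    rw [ae_all_iff]
    intro i
    rw [ae_iff]
    have hset : {ω | ¬ 0 ≤ Y i ω} = Y i ⁻¹' (Set.Iio 0) := by ext ω; simp [not_le]
    rw [hset, ← Measure.map_apply (hYmeas i) measurableSet_Iio, hYdist i]
    exact expMeasure_neg
  have hZbound : ∀ᵐ ω ∂ℙ, |Z ω| ≤ C := by
    filter_upwards [hYae] with ω hω
    rw [hZeq, abs_of_nonneg (hgnn _)]
    exact hgC _ hω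
  have hMemZ : MemLp Z 2 ℙ :=
    MemLp.of_bound hZm.aestronglyMeasurable C (by simpa [Real.norm_eq_abs] using hZbound)
  have hSm : MeasurableSet {x : ℝ | ¬ |x| ≤ C} := by
    have : {x : ℝ | ¬ |x| ≤ C} = (fun x : ℝ => |x|) ⁻¹' (Set.Ioi C) := by ext x; simp [not_le]
    rw [this]; exact measurable_abs measurableSet_Ioi
  have hZsbound : ∀ j, ∀ᵐ ω ∂ℙ, |Zs j ω| ≤ C := by
    intro j
    rw [ae_iff]
    have h1 : {ω | ¬ |Zs j ω| ≤ C} = Zs j ⁻¹' {x | ¬ |x| ≤ C} := rfl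
    rw [h1, ← Measure.map_apply (hZsmeas j) hSm, hZsdist j, Measure.map_apply hZm hSm]
    have h2 := hZbound
    rw [ae_iff] at h2
    exact h2
  have hMemZs : ∀ j, MemLp (Zs j) 2 ℙ := fun j =>
    MemLp.of_bound (hZsmeas j).aestronglyMeasurable C
      (by simpa [Real.norm_eq_abs] using hZsbound j)
  have hIntZs : ∀ j, Integrable (Zs j) ℙ := fun j => (hMemZs j).integrable one_le_two
  have hEZs : ∀ j, ∫ ω, Zs j ω ∂ℙ = ∫ ω, Z ω ∂ℙ := by
    intro j
    calc ∫ ω, Zs j ω ∂ℙ = ∫ x, x ∂(Measure.map (Zs j) ℙ) :=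
          (integral_map (hZsmeas j).aemeasurable measurable_id.aestronglyMeasurable).symm
      _ = ∫ x, x ∂(Measure.map Z ℙ) := by rw [hZsdist j]
      _ = ∫ ω, Z ω ∂ℙ := integral_map hZm.aemeasurable measurable_id.aestronglyMeasurable
  have hEZs2 : ∀ j, ∫ ω, Zs j ω ^ 2 ∂ℙ = ∫ ω, Z ω ^ 2 ∂ℙ := by
    intro j
    have hm2 : Measurable fun x : ℝ => x ^ 2 := measurable_id.pow_const 2
    calc ∫ ω, Zs j ω ^ 2 ∂ℙ = ∫ x, x ^ 2 ∂(Measure.map (Zs j) ℙ) :=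
          (integral_map (hZsmeas j).aemeasurable hm2.aestronglyMeasurable).symm
      _ = ∫ x, x ^ 2 ∂(Measure.map Z ℙ) := by rw [hZsdist j]
      _ = ∫ ω, Z ω ^ 2 ∂ℙ := integral_map hZm.aemeasurable hm2.aestronglyMeasurable
  have hVarZs : ∀ j, variance (Zs j) ℙ = variance Z ℙ := by
    intro j
    rw [variance_eq_sub (hMemZs j), variance_eq_sub hMemZ, hEZs j]
    congr 1
    show ∫ ω, (Zs j ^ 2) ω ∂ℙ = ∫ ω, (Z ^ 2) ω ∂ℙ
    simp only [Pi.pow_apply]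
    exact hEZs2 j
  have hpair : Set.Pairwise ↑(Finset.univ : Finset (Fin N))
      fun i j => IndepFun (Zs i) (Zs j) ℙ := fun i _ j _ hij => hZsindep.indepFun hij
  have hVarSum : variance (∑ j, Zs j) ℙ = N * variance Z ℙ := by
    rw [IndepFun.variance_sum (fun j _ => hMemZs j) hpair,
      Finset.sum_congr rfl fun j _ => hVarZs j, Finset.sum_const, Finset.card_univ]
    simp [nsmul_eq_mul]
  have hN0 : (0:ℝ) < N := by exact_mod_cast hN
  have hellHat_eq : ellHat = (1/(N:ℝ)) • ∑ j, Zs j := by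
    funext ω
    rw [hellHat]
    simp [Finset.sum_apply]
  have hVarEll : variance ellHat ℙ = variance Z ℙ / N := by
    rw [hellHat_eq, variance_smul, hVarSum]
    field_simp
  have hMeanEll : ∫ ω, ellHat ω ∂ℙ = ∫ ω, Z ω ∂ℙ := by
    rw [hellHat, integral_const_mul, integral_finset_sum _ (fun j _ => hIntZs j),
      Finset.sum_congr rfl fun j _ => hEZs j, Finset.sum_const, Finset.card_univ]
    simp [nsmul_eq_mul]
    field_simp
  -- conclusion
  rw [hRE, hVarEll, hMeanEll]
  rw [div_le_iff₀ hl_pos]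
  have hq : variance Z ℙ / N ≤ K / N * (∫ ω, Z ω ∂ℙ)^2 := by
    rw [div_mul_eq_mul_div]
    exact div_le_div_of_nonneg_right hVarZK hN0.le
  calc Real.sqrt (variance Z ℙ / N)
      ≤ Real.sqrt (K / N * (∫ ω, Z ω ∂ℙ)^2) := Real.sqrt_le_sqrt hq
    _ = Real.sqrt (K / N) * ∫ ω, Z ω ∂ℙ := by
        rw [Real.sqrt_mul (by positivity), Real.sqrt_sq hl_pos.le]
end

section
/- Let $n \geq 1$, let $\lambda_1,\dots,\lambda_n > 0$ with $\underline{\lambda} = \min_i \lambda_i$, and assume $2\underline{\lambda} < n$. Let $Y_1,\dots,Y_n$ be i.i.d. exponential random variables with rate $n$ and set $Z = \mathbf{1}_{\{\sum_{i=1}^n Y_i \leq 1\}} \cdot \prod_{i=1}^n \frac{\lambda_i e^{-\lambda_i Y_i}}{n e^{-n Y_i}}$. Then $\mathbb{E}[Z^2] \leq \Big(\frac{\prod_{i=1}^n \lambda_i}{n^n}\Big)^2 \cdot \frac{n^n}{(n-1)!} \cdot \frac{1}{(n - 2\underline{\lambda})^{n}} \cdot I(n, n - 2\underline{\lambda})$,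 where $I(n,x) = \int_0^x t^{n-1}e^{t}\,dt$. -/
open MeasureTheory ProbabilityTheory Real
open scoped NNReal ENNReal

namespace ISB

noncomputable def J (δ : ℝ) (k : ℕ) (u : ℝ) : ℝ := ∫ s in (0:ℝ)..u, s ^ k * Real.exp (δ * s)

noncomputable def Jm (δ : ℝ) (k : ℕ) (u : ℝ) : ℝ := J δ k (max u 0)

lemma contInt (δ : ℝ) (k : ℕ) : Continuous fun s : ℝ => s ^ k * Real.exp (δ * s) := by
  fun_prop

@[simp] lemma J_zero (δ : ℝ) (k : ℕ) : J δ k 0 = 0 := by simp [J]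

lemma J_hasDerivAt (δ : ℝ) (k : ℕ) (y : ℝ) :
    HasDerivAt (J δ k) (y ^ k * Real.exp (δ * y)) y :=
  ((contInt δ k).integral_hasStrictDerivAt 0 y).hasDerivAt

lemma J_continuous (δ : ℝ) (k : ℕ) : Continuous (J δ k) :=
  continuous_iff_continuousAt.2 fun y => (J_hasDerivAt δ k y).continuousAt

lemma lemA (δ : ℝ) (k : ℕ) (u : ℝ) :
    J δ k u = u ^ (k+1) / (k+1) * Real.exp (δ * u) - δ / (k+1) * J δ (k+1) u := by
  have hd : ∀ s : ℝ, HasDerivAt (fun s : ℝ => s ^ (k+1) / (k+1) * Real.exp (δ * s))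
      (s ^ k * Real.exp (δ * s) + δ / (k+1) * (s ^ (k+1) * Real.exp (δ * s))) s := by
    intro s
    have h1 := (hasDerivAt_pow (k+1) s).div_const ((k:ℝ)+1)
    have h2 := ((hasDerivAt_id s).const_mul δ).exp
    simp only [id_eq, mul_one] at h2
    have : HasDerivAt (fun s : ℝ => s ^ (k+1) / (k+1) * Real.exp (δ * s)) _ s := h1.mul h2
    convert this using 1
    have hk : ((k:ℝ)+1) ≠ 0 := by positivity
    push_cast
    field_simp
  have hint := intervalIntegral.integral_eq_sub_of_hasDerivAt
    (f := fun s : ℝ => s ^ (k+1) / (k+1) * Real.exp (δ * s))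
    (f' := fun s : ℝ => s ^ k * Real.exp (δ * s) + δ / (k+1) * (s ^ (k+1) * Real.exp (δ * s)))
    (a := 0) (b := u) (fun s _ => hd s)
    (by apply Continuous.intervalIntegrable; fun_prop)
  rw [intervalIntegral.integral_add ((contInt δ k).intervalIntegrable _ _)
    (Continuous.intervalIntegrable (by fun_prop) _ _),
    intervalIntegral.integral_const_mul] at hint
  norm_num at hint
  unfold J
  linarith

lemma lemB (δ : ℝ) (k : ℕ) (u : ℝ) :
    ∫ y in (0:ℝ)..u, Real.exp (-δ * y) * J δ k y
      = Real.exp (-δ * u) * J δ (k+1) u / (k+1) := by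
  have hd : ∀ y : ℝ, HasDerivAt (fun y : ℝ => Real.exp (-δ * y) * J δ (k+1) y / (k+1))
      (Real.exp (-δ * y) * J δ k y) y := by
    intro y
    have h2 := ((hasDerivAt_id y).const_mul (-δ)).exp
    simp only [id_eq, mul_one] at h2
    have : HasDerivAt (fun y : ℝ => Real.exp (-δ * y) * J δ (k+1) y / (k+1)) _ y :=
      (h2.mul (J_hasDerivAt δ (k+1) y)).div_const ((k:ℝ)+1)
    convert this using 1
    rw [lemA δ k y]
    have hk : ((k:ℝ)+1) ≠ 0 := by positivity
    field_simp
    ring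
  have hint := intervalIntegral.integral_eq_sub_of_hasDerivAt
    (f := fun y : ℝ => Real.exp (-δ * y) * J δ (k+1) y / (k+1))
    (f' := fun y : ℝ => Real.exp (-δ * y) * J δ k y)
    (a := 0) (b := u) (fun y _ => hd y)
    (((Continuous.mul (by fun_prop) (J_continuous δ k)).intervalIntegrable _ _))
  rw [hint]
  norm_num

end ISB

namespace ISB2
open ISB
lemma Jm_nonpos {δ : ℝ} {k : ℕ} {u : ℝ} (hu : u ≤ 0) : Jm δ k u = 0 := by
  simp [Jm, max_eq_right hu]

lemma Jm_of_nonneg {δ : ℝ} {k : ℕ} {u : ℝ} (hu : 0 ≤ u) : Jm δ k u = J δ k u := by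
  simp [Jm, max_eq_left hu]

lemma lemC (δ : ℝ) (k : ℕ) (u : ℝ) :
    (∫ x : ℝ, (if 0 ≤ x then Real.exp (δ * x) * Jm δ k (u - x) else 0))
      = Jm δ (k+1) u / (k+1) := by
  by_cases hu : u ≤ 0
  · have : (fun x : ℝ => (if 0 ≤ x then Real.exp (δ * x) * Jm δ k (u - x) else 0))
        = fun _ => (0:ℝ) := by
      funext x
      split_ifs with hx
      · rw [Jm_nonpos (by linarith), mul_zero]
      · rfl
    rw [this, integral_zero, Jm_nonpos hu, zero_div]
  · push_neg at hu
    have heq : (fun x : ℝ => (if 0 ≤ x then Real.exp (δ * x) * Jm δ k (u - x) else 0))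
        = Set.indicator (Set.Icc 0 u) (fun x => Real.exp (δ * x) * J δ k (u - x)) := by
      funext x
      by_cases hx : x ∈ Set.Icc (0:ℝ) u
      · rw [Set.indicator_of_mem hx, if_pos hx.1, Jm_of_nonneg (by linarith [hx.2])]
      · rw [Set.indicator_of_notMem hx]
        rw [Set.mem_Icc, not_and_or, not_le, not_le] at hx
        rcases hx with hx | hx
        · rw [if_neg (not_le.mpr hx)]
        · rw [if_pos (by linarith), Jm_nonpos (by linarith), mul_zero]
    rw [heq, MeasureTheory.integral_indicator measurableSet_Icc,
      MeasureTheory.integral_Icc_eq_integral_Ioc,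
      ← intervalIntegral.integral_of_le hu.le]
    have hrw : ∀ x : ℝ, Real.exp (δ * x) * J δ k (u - x)
        = Real.exp (δ * u) * (Real.exp (-δ * (u - x)) * J δ k (u - x)) := by
      intro x
      rw [← mul_assoc, ← Real.exp_add]
      ring_nf
    simp_rw [hrw]
    rw [intervalIntegral.integral_const_mul,
      intervalIntegral.integral_comp_sub_left (fun y => Real.exp (-δ * y) * J δ k y) u,
      sub_self, sub_zero, lemB, Jm_of_nonneg hu.le, ← mul_div_assoc, ← mul_assoc,
      ← Real.exp_add]
    ring_nf
    rw [Real.exp_zero, one_mul]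
end ISB2

namespace ISB3
open ISB ISB2 ProbabilityTheory

lemma expPDF_eq (r : ℝ) : expMeasure r
    = volume.withDensity (fun x => ENNReal.ofReal (if 0 ≤ x then r * Real.exp (-(r * x)) else 0)) := by
  rw [expMeasure, gammaMeasure]
  congr 1
  funext x
  rw [gammaPDF_eq]
  congr 1
  split_ifs with h
  · norm_num [Real.Gamma_one, Real.rpow_one, Real.rpow_zero]
  · rfl

lemma measurable_expPDF (r : ℝ) : Measurable (fun x : ℝ => if 0 ≤ x then r * Real.exp (-(r * x)) else 0) := by
  apply Measurable.ite measurableSet_Ici <;> fun_prop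

lemma integral_expMeasure {r : ℝ} (hr : 0 ≤ r) (g : ℝ → ℝ) :
    ∫ x, g x ∂(expMeasure r)
      = ∫ x, (if 0 ≤ x then r * Real.exp (-(r * x)) else 0) * g x := by
  rw [expPDF_eq]
  have h1 : (fun x : ℝ => ENNReal.ofReal (if 0 ≤ x then r * Real.exp (-(r * x)) else 0))
      = fun x : ℝ => ((Real.toNNReal (if 0 ≤ x then r * Real.exp (-(r * x)) else 0) : ℝ≥0) : ENNReal) := rfl
  rw [h1, integral_withDensity_eq_integral_smul ((measurable_expPDF r).real_toNNReal) g]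
  congr 1
  funext x
  split_ifs with h
  · rw [NNReal.smul_def, Real.coe_toNNReal _ (by positivity)]
    rfl
  · simp

lemma expMeasure_Iio (r : ℝ) : expMeasure r (Set.Iio 0) = 0 := by
  rw [expPDF_eq, withDensity_apply _ measurableSet_Iio]
  rw [setLIntegral_congr_fun measurableSet_Iio
    (fun x (hx : x ∈ Set.Iio (0:ℝ)) => by
      rw [if_neg (not_le.mpr hx), ENNReal.ofReal_zero])]
  simp

lemma pi_exp_ae_nonneg {r : ℝ} (hr : 0 < r) (k : ℕ) :
    ∀ᵐ y : Fin k → ℝ ∂(Measure.pi fun _ => expMeasure r), ∀ i, 0 ≤ y i := by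
  haveI : IsProbabilityMeasure (expMeasure r) := isProbabilityMeasure_expMeasure hr
  rw [ae_iff]
  have hsub : {y : Fin k → ℝ | ¬ ∀ i, 0 ≤ y i} ⊆ ⋃ i, {y : Fin k → ℝ | y i < 0} := by
    intro y hy
    push_neg at hy
    obtain ⟨i, hi⟩ := hy
    exact Set.mem_iUnion.2 ⟨i, hi⟩
  refine measure_mono_null hsub (measure_iUnion_null fun i => ?_)
  have hset : {y : Fin k → ℝ | y i < 0}
      = Set.pi Set.univ (Function.update (fun _ : Fin k => (Set.univ : Set ℝ)) i (Set.Iio 0)) := by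
    ext y
    simp only [Set.mem_setOf_eq, Set.mem_pi, Set.mem_univ, forall_true_left]
    constructor
    · intro hy j
      rcases eq_or_ne j i with rfl | hj
      · rw [Function.update_self]; exact hy
      · rw [Function.update_of_ne hj]; trivial
    · intro hy
      have := hy i
      rwa [Function.update_self] at this
  rw [hset, Measure.pi_pi]
  refine Finset.prod_eq_zero (Finset.mem_univ i) ?_
  rw [Function.update_self]
  exact expMeasure_Iio r

end ISB3

namespace ISB4
open ISB ISB2 ISB3 ProbabilityTheory

lemma keyP {r : ℝ} (hr : 0 < r) (γ : ℝ) : ∀ (k : ℕ) (u : ℝ),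
    (∫ y : Fin (k+1) → ℝ, (if ∑ i, y i ≤ u then Real.exp (γ * ∑ i, y i) else 0)
        ∂(Measure.pi fun _ => expMeasure r))
      = r ^ (k+1) / (Nat.factorial k) * Jm (γ - r) k u := by
  haveI : IsProbabilityMeasure (expMeasure r) := isProbabilityMeasure_expMeasure hr
  intro k
  induction k with
  | zero =>
    intro u
    have hmp := measurePreserving_funUnique (expMeasure r) (Fin 1)
    have h1 : (∫ y : Fin 1 → ℝ, (if ∑ i, y i ≤ u then Real.exp (γ * ∑ i, y i) else 0)
          ∂(Measure.pi fun _ => expMeasure r))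
        = ∫ x : ℝ, (if x ≤ u then Real.exp (γ * x) else 0) ∂(expMeasure r) := by
      rw [← hmp.integral_comp' (fun x : ℝ => if x ≤ u then Real.exp (γ * x) else 0)]
      congr 1
      funext y
      have : (MeasurableEquiv.funUnique (Fin 1) ℝ) y = y 0 := rfl
      rw [this, Fin.sum_univ_one]
    rw [h1, integral_expMeasure hr.le]
    have h2 : (fun x : ℝ => (if 0 ≤ x then r * Real.exp (-(r * x)) else 0) *
          (if x ≤ u then Real.exp (γ * x) else 0))
        = Set.indicator (Set.Icc 0 u) (fun x => r * Real.exp ((γ - r) * x)) := by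
      funext x
      by_cases hx : x ∈ Set.Icc (0:ℝ) u
      · rw [Set.indicator_of_mem hx, if_pos hx.1, if_pos hx.2, mul_assoc, ← Real.exp_add]
        ring_nf
      · rw [Set.indicator_of_notMem hx]
        rw [Set.mem_Icc, not_and_or] at hx
        rcases hx with hx | hx
        · rw [if_neg hx, zero_mul]
        · rw [if_neg hx, mul_zero]
    rw [h2]
    by_cases hu : 0 ≤ u
    · rw [MeasureTheory.integral_indicator measurableSet_Icc,
        MeasureTheory.integral_Icc_eq_integral_Ioc,
        ← intervalIntegral.integral_of_le hu, intervalIntegral.integral_const_mul]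
      have : Jm (γ - r) 0 u = ∫ x in (0:ℝ)..u, Real.exp ((γ - r) * x) := by
        rw [Jm_of_nonneg hu]
        unfold J
        simp
      rw [this]
      simp [Nat.factorial]
    · push_neg at hu
      rw [Set.Icc_eq_empty (not_le.mpr hu)]
      simp [Jm_nonpos hu.le]
  | succ k ih =>
    intro u
    set δ := γ - r with hδ
    set e := MeasurableEquiv.piFinSuccAbove (fun _ : Fin (k+2) => ℝ) 0 with he
    set F : (Fin (k+2) → ℝ) → ℝ :=
      fun y => if ∑ i, y i ≤ u then Real.exp (γ * ∑ i, y i) else 0 with hF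
    have hmp : MeasurePreserving (⇑e) (Measure.pi fun _ : Fin (k+2) => expMeasure r)
        ((expMeasure r).prod (Measure.pi fun _ : Fin (k+1) => expMeasure r)) :=
      measurePreserving_piFinSuccAbove (fun _ : Fin (k+2) => expMeasure r) 0
    have hsummeas : Measurable (fun y : Fin (k+2) → ℝ => ∑ i, y i) :=
      Finset.measurable_sum _ (fun i _ => measurable_pi_apply i)
    have hFmeas : Measurable F := by
      refine Measurable.ite (measurableSet_le hsummeas measurable_const) ?_ measurable_const
      exact (hsummeas.const_mul γ).exp
    have hFint : Integrable F (Measure.pi fun _ : Fin (k+2) => expMeasure r) := by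
      refine Integrable.mono' (integrable_const (Real.exp (|γ| * |u|)))
        hFmeas.aestronglyMeasurable ?_
      filter_upwards [pi_exp_ae_nonneg hr (k+2)] with y hy
      rw [hF]
      dsimp only
      split_ifs with h
      · rw [Real.norm_eq_abs, Real.abs_exp]
        apply Real.exp_le_exp.2
        have hsum0 : 0 ≤ ∑ i, y i := Finset.sum_nonneg fun i _ => hy i
        calc γ * ∑ i, y i ≤ |γ| * ∑ i, y i := mul_le_mul_of_nonneg_right (le_abs_self γ) hsum0
          _ ≤ |γ| * |u| := mul_le_mul_of_nonneg_left (le_trans h (le_abs_self u))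
              (abs_nonneg γ)
      · simp [Real.exp_nonneg]
    have h1 : (∫ y, F y ∂(Measure.pi fun _ : Fin (k+2) => expMeasure r))
        = ∫ z, F (e.symm z)
            ∂((expMeasure r).prod (Measure.pi fun _ : Fin (k+1) => expMeasure r)) := by
      rw [← hmp.integral_comp' (fun z => F (e.symm z))]
      simp only [MeasurableEquiv.symm_apply_apply]
    have hFint' : Integrable (fun z => F (e.symm z))
        ((expMeasure r).prod (Measure.pi fun _ : Fin (k+1) => expMeasure r)) := by
      rw [← hmp.map_eq, MeasureTheory.integrable_map_equiv e]
      have : ((fun z => F (e.symm z)) ∘ ⇑e) = F := by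
        funext y
        simp [MeasurableEquiv.symm_apply_apply]
      rwa [this]
    have hcons : ∀ (x : ℝ) (y : Fin (k+1) → ℝ), F (e.symm (x, y))
        = Real.exp (γ * x) * (if ∑ i, y i ≤ u - x then Real.exp (γ * ∑ i, y i) else 0) := by
      intro x y
      have hsymm : e.symm (x, y) = Fin.cons x y := by
        rw [he, MeasurableEquiv.piFinSuccAbove_symm_apply]
        exact Fin.insertNth_zero' x y
      rw [hF]
      dsimp only
      rw [hsymm, Fin.sum_cons]
      by_cases h : ∑ i, y i ≤ u - x
      · rw [if_pos (by linarith), if_pos h, ← Real.exp_add]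
        ring_nf
      · rw [if_neg (fun hc => h (by linarith)), if_neg h, mul_zero]
    rw [h1, MeasureTheory.integral_prod _ hFint']
    have hinner : ∀ x : ℝ, (∫ y, F (e.symm (x, y)) ∂(Measure.pi fun _ : Fin (k+1) => expMeasure r))
        = (r ^ (k+1) / (Nat.factorial k)) * (Real.exp (γ * x) * Jm δ k (u - x)) := by
      intro x
      simp_rw [hcons x]
      rw [MeasureTheory.integral_const_mul, ih (u - x)]
      ring
    simp_rw [hinner]
    rw [MeasureTheory.integral_const_mul, integral_expMeasure hr.le]
    have hcomb : (fun x : ℝ => (if 0 ≤ x then r * Real.exp (-(r * x)) else 0) *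
          (Real.exp (γ * x) * Jm δ k (u - x)))
        = fun x : ℝ => r * (if 0 ≤ x then Real.exp (δ * x) * Jm δ k (u - x) else 0) := by
      funext x
      split_ifs with h
      · have hexp : Real.exp (-(r * x)) * Real.exp (γ * x) = Real.exp (δ * x) := by
          rw [← Real.exp_add]
          congr 1
          rw [hδ]
          ring
        calc (r * Real.exp (-(r * x))) * (Real.exp (γ * x) * Jm δ k (u - x))
            = r * ((Real.exp (-(r * x)) * Real.exp (γ * x)) * Jm δ k (u - x)) := by ring
          _ = r * (Real.exp (δ * x) * Jm δ k (u - x)) := by rw [hexp]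
      · simp
    rw [hcomb, MeasureTheory.integral_const_mul, lemC δ k u]
    have hkfac : ((k+1).factorial : ℝ) = (k.factorial : ℝ) * (k+1) := by
      rw [Nat.factorial_succ]
      push_cast
      ring
    have hfk : (k.factorial : ℝ) ≠ 0 := Nat.cast_ne_zero.2 (Nat.factorial_ne_zero k)
    have hk1 : ((k:ℝ)+1) ≠ 0 := by positivity
    rw [hkfac]
    field_simp
    ring

lemma subst_lemma {δ : ℝ} (hδ : δ ≠ 0) (m : ℕ) :
    (∫ t in (0:ℝ)..δ, t ^ m * Real.exp t)
      = δ ^ (m+1) * ∫ s in (0:ℝ)..1, s ^ m * Real.exp (δ * s) := by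
  have h := intervalIntegral.integral_comp_mul_left (a := (0:ℝ)) (b := 1)
    (f := fun t => t ^ m * Real.exp t) hδ
  simp only [mul_zero, mul_one, smul_eq_mul] at h
  have h2 : (∫ x in (0:ℝ)..1, (δ * x) ^ m * Real.exp (δ * x))
      = δ ^ m * ∫ x in (0:ℝ)..1, x ^ m * Real.exp (δ * x) := by
    rw [← intervalIntegral.integral_const_mul]
    congr 1
    funext x
    rw [mul_pow]
    ring
  rw [h2] at h
  have h3 : (∫ t in (0:ℝ)..δ, t ^ m * Real.exp t)
      = δ * (δ ^ m * ∫ x in (0:ℝ)..1, x ^ m * Real.exp (δ * x)) := by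
    rw [h, ← mul_assoc, mul_inv_cancel₀ hδ, one_mul]
  rw [h3, pow_succ]
  ring

lemma joint_law {Ω : Type*} [MeasureSpace Ω] [IsProbabilityMeasure (ℙ : Measure Ω)]
    {n : ℕ} {r : ℝ} (hr : 0 < r) (Y : Fin n → Ω → ℝ) (hYmeas : ∀ i, Measurable (Y i))
    (hYindep : iIndepFun Y ℙ)
    (hYdist : ∀ i, Measure.map (Y i) ℙ = expMeasure r) :
    Measure.map (fun ω (i : Fin n) => Y i ω) ℙ
      = Measure.pi (fun _ : Fin n => expMeasure r) := by
  haveI : IsProbabilityMeasure (expMeasure r) := isProbabilityMeasure_expMeasure hr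
  symm
  apply Measure.pi_eq
  intro s hs
  have hT : Measurable (fun ω (i : Fin n) => Y i ω) := measurable_pi_lambda _ hYmeas
  rw [Measure.map_apply hT (MeasurableSet.univ_pi hs)]
  have hpre : (fun ω (i : Fin n) => Y i ω) ⁻¹' (Set.pi Set.univ s)
      = ⋂ i ∈ Finset.univ, Y i ⁻¹' s i := by
    ext ω
    simp [Set.mem_pi]
  rw [hpre, hYindep.measure_inter_preimage_eq_mul Finset.univ (fun i _ => hs i)]
  refine Finset.prod_congr rfl fun i _ => ?_
  rw [← hYdist i, Measure.map_apply (hYmeas i) (hs i)]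

end ISB4
/-- **Upper bound on the second moment of the importance-sampling estimator.**
If `Y i ~ Exp(n)` are i.i.d., `lamMin = min lamᵢ`, `2 lamMin < n`, and
`Z = 1_{∑ Yᵢ ≤ 1} · ∏ (lamᵢ e^{-lamᵢ Yᵢ}) / (n e^{-n Yᵢ})`, then
`E[Z²] ≤ (∏ lamᵢ / nⁿ)² · nⁿ/(n-1)! · 1/(n - 2 lamMin)ⁿ · I(n, n - 2 lamMin)`,
where `I(n,x) = ∫₀ˣ tⁿ⁻¹ eᵗ dt`. -/
theorem is_estimator_second_moment_bound
    {Ω : Type*} [MeasureSpace Ω] [IsProbabilityMeasure (ℙ : Measure Ω)]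
    (n : ℕ) (hn : 1 ≤ n) (lam : Fin n → ℝ) (hlam : ∀ i, 0 < lam i)
    (lamMin : ℝ)
    (hMin : IsLeast (Set.range lam) lamMin)
    (h2 : 2 * lamMin < n)
    (Y : Fin n → Ω → ℝ)
    (hYmeas : ∀ i, Measurable (Y i))
    (hYindep : iIndepFun Y ℙ)
    (hYdist : ∀ i, Measure.map (Y i) ℙ = expMeasure n)
    (Z : Ω → ℝ)
    (hZ : Z = fun ω => (if ∑ i, Y i ω ≤ 1 then (1 : ℝ) else 0) *
      ∏ i, (lam i * Real.exp (-(lam i) * Y i ω)) / ((n : ℝ) * Real.exp (-(n : ℝ) * Y i ω))) :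
    ∫ ω, (Z ω) ^ 2 ∂ℙ ≤
      ((∏ i, lam i) / (n : ℝ) ^ n) ^ 2 * ((n : ℝ) ^ n / (Nat.factorial (n - 1) : ℝ)) *
        (1 / ((n : ℝ) - 2 * lamMin) ^ n) *
        ∫ t in (0 : ℝ)..((n : ℝ) - 2 * lamMin), t ^ (n - 1) * Real.exp t := by
  obtain ⟨m, rfl⟩ : ∃ m, n = m + 1 := ⟨n - 1, (Nat.succ_pred_eq_of_pos hn).symm⟩
  simp only [Nat.add_sub_cancel]
  obtain ⟨i0, hi0⟩ := hMin.1
  have hlamMinpos : 0 < lamMin := hi0 ▸ hlam i0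
  have hNpos : (0:ℝ) < ((m+1:ℕ):ℝ) := by positivity
  set N : ℝ := ((m+1:ℕ):ℝ) with hN
  set α : ℝ := 2 * (N - lamMin) with hα
  set δ : ℝ := N - 2 * lamMin with hδd
  have hδpos : 0 < δ := by rw [hδd]; linarith
  have hαδ : α - N = δ := by rw [hα, hδd]; ring
  have hαpos : 0 < α := by rw [hα]; nlinarith
  set C : ℝ := (∏ i, lam i) / N ^ (m+1) with hC
  set S : Ω → ℝ := fun ω => ∑ i, Y i ω with hS
  have hSmeas : Measurable S := Finset.measurable_sum _ (fun i _ => hYmeas i)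
  set g : ℝ → ℝ := fun s => if s ≤ 1 then Real.exp (α * s) else 0 with hg
  have hgmeas : Measurable g := by
    refine Measurable.ite (measurableSet_le measurable_id measurable_const) ?_ measurable_const
    fun_prop
  have hgnonneg : ∀ s, 0 ≤ g s := by
    intro s
    rw [hg]
    dsimp only
    split_ifs
    · exact Real.exp_nonneg _
    · exact le_refl 0
  have hgbdd : ∀ s, g s ≤ Real.exp α := by
    intro s
    rw [hg]
    dsimp only
    split_ifs with h
    · exact Real.exp_le_exp.2 (by nlinarith)
    · exact Real.exp_nonneg _
  have hae : ∀ᵐ ω ∂ℙ, ∀ i, 0 ≤ Y i ω := by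
    rw [ae_all_iff]
    intro i
    rw [ae_iff]
    have hset : {ω | ¬ 0 ≤ Y i ω} = Y i ⁻¹' (Set.Iio 0) := by
      ext ω
      simp [not_le]
    rw [hset, ← Measure.map_apply (hYmeas i) measurableSet_Iio, hYdist i]
    exact ISB3.expMeasure_Iio _
  have hCsq : (∏ i, (lam i / N) ^ 2) = C ^ 2 := by
    rw [Finset.prod_pow]
    congr 1
    rw [Finset.prod_div_distrib, Finset.prod_const, Finset.card_univ, Fintype.card_fin, hC]
  have hbound : ∀ᵐ ω ∂ℙ, Z ω ^ 2 ≤ C ^ 2 * g (S ω) := by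
    filter_upwards [hae] with ω hy
    rw [hZ]
    dsimp only
    by_cases hind : ∑ i, Y i ω ≤ 1
    · rw [if_pos hind, one_mul]
      have ht0 : ∀ i : Fin (m+1),
          (lam i * Real.exp (-(lam i) * Y i ω)) / (N * Real.exp (-N * Y i ω))
            = (lam i / N) * Real.exp ((N - lam i) * Y i ω) := by
        intro i
        rw [mul_div_mul_comm, ← Real.exp_sub]
        congr 1
        ring
      have ht : ∀ i : Fin (m+1),
          ((lam i * Real.exp (-(lam i) * Y i ω)) / (N * Real.exp (-N * Y i ω))) ^ 2
            = (lam i / N) ^ 2 * Real.exp (2 * (N - lam i) * Y i ω) := by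
        intro i
        rw [ht0 i, mul_pow, sq (Real.exp _), ← Real.exp_add]
        congr 1
        ring
      calc (∏ i, (lam i * Real.exp (-(lam i) * Y i ω)) / (N * Real.exp (-N * Y i ω))) ^ 2
          = ∏ i, ((lam i * Real.exp (-(lam i) * Y i ω)) / (N * Real.exp (-N * Y i ω))) ^ 2 :=
            (Finset.prod_pow _ 2 _).symm
        _ = ∏ i, ((lam i / N) ^ 2 * Real.exp (2 * (N - lam i) * Y i ω)) :=
            Finset.prod_congr rfl fun i _ => ht i
        _ = (∏ i, (lam i / N) ^ 2) * ∏ i, Real.exp (2 * (N - lam i) * Y i ω) :=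
            Finset.prod_mul_distrib
        _ = C ^ 2 * Real.exp (∑ i, 2 * (N - lam i) * Y i ω) := by
            rw [hCsq, ← Real.exp_sum]
        _ ≤ C ^ 2 * g (S ω) := by
            rw [hg]
            dsimp only
            rw [if_pos (by exact hind)]
            refine mul_le_mul_of_nonneg_left ?_ (sq_nonneg C)
            refine Real.exp_le_exp.2 ?_
            calc ∑ i, 2 * (N - lam i) * Y i ω
                ≤ ∑ i, 2 * (N - lamMin) * Y i ω := by
                  refine Finset.sum_le_sum fun i _ => ?_
                  have hi : lamMin ≤ lam i := hMin.2 ⟨i, rfl⟩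
                  exact mul_le_mul_of_nonneg_right (by linarith) (hy i)
              _ = α * S ω := by
                  rw [hS, hα]
                  dsimp only
                  rw [Finset.mul_sum]
    · rw [if_neg hind, zero_mul]
      norm_num
      exact mul_nonneg (sq_nonneg C) (hgnonneg _)
  have hZmeas : Measurable Z := by
    rw [hZ]
    refine Measurable.mul ?_ ?_
    · exact Measurable.ite
        (measurableSet_le (Finset.measurable_sum _ (fun i _ => hYmeas i)) measurable_const)
        measurable_const measurable_const
    · refine Finset.measurable_prod _ fun i _ => Measurable.div ?_ ?_
      · exact (((hYmeas i).const_mul (-(lam i))).exp).const_mul (lam i)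
      · exact (((hYmeas i).const_mul (-N)).exp).const_mul N
  have hbmeas : Measurable (fun ω => C ^ 2 * g (S ω)) := (hgmeas.comp hSmeas).const_mul _
  have hbint : Integrable (fun ω => C ^ 2 * g (S ω)) ℙ := by
    refine Integrable.mono' (integrable_const (C ^ 2 * Real.exp α))
      hbmeas.aestronglyMeasurable (ae_of_all _ fun ω => ?_)
    rw [Real.norm_eq_abs, abs_of_nonneg (mul_nonneg (sq_nonneg C) (hgnonneg _))]
    exact mul_le_mul_of_nonneg_left (hgbdd _) (sq_nonneg C)
  have hZ2int : Integrable (fun ω => Z ω ^ 2) ℙ := by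
    refine Integrable.mono' hbint ((hZmeas.pow_const 2).aestronglyMeasurable) ?_
    filter_upwards [hbound] with ω h
    rw [Real.norm_eq_abs, abs_of_nonneg (sq_nonneg _)]
    exact h
  have hle : ∫ ω, Z ω ^ 2 ∂ℙ ≤ ∫ ω, C ^ 2 * g (S ω) ∂ℙ :=
    integral_mono_ae hZ2int hbint hbound
  have hT : Measurable (fun ω (i : Fin (m+1)) => Y i ω) := measurable_pi_lambda _ hYmeas
  have hmap := ISB4.joint_law hNpos Y hYmeas hYindep hYdist
  have hGmeas : Measurable (fun y : Fin (m+1) → ℝ =>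
      if ∑ i, y i ≤ 1 then Real.exp (α * ∑ i, y i) else 0) := by
    refine Measurable.ite (measurableSet_le
      (Finset.measurable_sum _ (fun i _ => measurable_pi_apply i)) measurable_const)
      ?_ measurable_const
    exact ((Finset.measurable_sum _ (fun i _ => measurable_pi_apply i)).const_mul α).exp
  have hpush : ∫ ω, g (S ω) ∂ℙ
      = ∫ y : Fin (m+1) → ℝ, (if ∑ i, y i ≤ 1 then Real.exp (α * ∑ i, y i) else 0)
          ∂(Measure.pi fun _ : Fin (m+1) => expMeasure N) := by
    rw [← hmap, integral_map hT.aemeasurable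
      (by rw [hmap]; exact hGmeas.aestronglyMeasurable)]
  have hkey := ISB4.keyP hNpos α m 1
  have hJm : ISB.Jm (α - N) m 1 = ∫ s in (0:ℝ)..1, s ^ m * Real.exp (δ * s) := by
    rw [ISB2.Jm_of_nonneg zero_le_one, hαδ]
    rfl
  refine le_trans hle ?_
  rw [MeasureTheory.integral_const_mul, hpush, hkey, hJm, ISB4.subst_lemma hδpos.ne' m]
  apply le_of_eq
  have hδne : δ ^ (m+1) ≠ 0 := pow_ne_zero _ hδpos.ne'
  field_simp
end

section
/- Let $n \geq 1$ and let $X_1,\dots,X_n$ be independent exponentially distributed random variables with pairwise distinct rates $\lambda_1,\dots,\lambda_n > 0$. Then for every $t \geq 0$, the CDF of the hypoexponential random variable $\sum_{i=1}^n X_i$ satisfies $\mathbb{P}\big(\sum_{i=1}^n X_i \leq t\big) = 1 - \sum_{i=1}^n e^{-\lambda_i t} \prod_{j \neq i} \frac{\lambda_j}{\lambda_j - \lambda_i}$. -/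
open MeasureTheory ProbabilityTheory Real Finset



lemma integral_exp_mul' (d : ℝ) (hd : d ≠ 0) (t : ℝ) :
    ∫ z in (0:ℝ)..t, Real.exp (d * z) = (Real.exp (d * t) - 1) / d := by
  have h : ∀ z ∈ Set.uIcc (0:ℝ) t, HasDerivAt (fun x => Real.exp (d * x) / d)
      (Real.exp (d * z)) z := by
    intro z _
    have h1 : HasDerivAt (fun x : ℝ => Real.exp (d * x)) (Real.exp (d * z) * d) z := by
      simpa using (((hasDerivAt_id z).const_mul d).exp)
    have h2 := h1.div_const d
    rwa [mul_div_assoc, div_self hd, mul_one] at h2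
  rw [intervalIntegral.integral_eq_sub_of_hasDerivAt h
    (((Real.continuous_exp.comp (continuous_const.mul continuous_id)).intervalIntegrable 0 t))]
  rw [mul_zero, Real.exp_zero]
  ring

lemma key_sum {ι : Type*} [DecidableEq ι] (s : Finset ι) (v : ι → ℝ) (hs : s.Nonempty)
    (hinj : Set.InjOn v s) :
    ∑ i ∈ s, ∏ j ∈ s.erase i, v j / (v j - v i) = 1 := by
  have h := congrArg (Polynomial.eval (0:ℝ)) (Lagrange.sum_basis hinj hs)
  rw [Polynomial.eval_finset_sum, Polynomial.eval_one] at h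
  rw [← h]
  refine Finset.sum_congr rfl fun i hi => ?_
  rw [Lagrange.basis, Polynomial.eval_prod]
  refine Finset.prod_congr rfl fun j hj => ?_
  rw [Lagrange.basisDivisor]
  simp only [Polynomial.eval_mul, Polynomial.eval_C, Polynomial.eval_sub, Polynomial.eval_X]
  rw [zero_sub, mul_comm, ← div_eq_mul_inv, ← neg_div_neg_eq, neg_sub]

lemma key_prod {ι : Type*} [DecidableEq ι] (s : Finset ι) (v : ι → ℝ) (a : ι) (ha : a ∉ s)
    (hinj : Set.InjOn v (insert a s : Finset ι)) :
    ∏ j ∈ s, v j / (v j - v a)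
      = 1 - ∑ i ∈ s, v a / (v a - v i) * ∏ j ∈ s.erase i, v j / (v j - v i) := by
  have h := key_sum (insert a s) v (Finset.insert_nonempty a s) hinj
  rw [Finset.sum_insert ha, Finset.erase_insert ha] at h
  have h2 : ∀ i ∈ s, ∏ j ∈ (insert a s).erase i, v j / (v j - v i)
      = v a / (v a - v i) * ∏ j ∈ s.erase i, v j / (v j - v i) := by
    intro i hi
    rw [Finset.erase_insert_of_ne (fun hia : a = i => ha (hia ▸ hi)), Finset.prod_insert
      (fun hmem => ha (Finset.mem_of_mem_erase hmem))]
  rw [Finset.sum_congr rfl h2] at h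
  linarith

lemma hypo_aux {Ω : Type*} [MeasureSpace Ω] [IsProbabilityMeasure (ℙ : Measure Ω)]
    {N : ℕ} (lam : Fin N → ℝ) (hlam : ∀ i, 0 < lam i)
    (hdistinct : ∀ i j, i ≠ j → lam i ≠ lam j)
    (X : Fin N → Ω → ℝ) (hXmeas : ∀ i, Measurable (X i))
    (hXindep : iIndepFun X ℙ)
    (hXdist : ∀ i, Measure.map (X i) ℙ = expMeasure (lam i)) :
    ∀ (s : Finset (Fin N)), ∀ t : ℝ, 0 ≤ t →
    (ℙ {ω | ∑ i ∈ s, X i ω ≤ t}).toReal =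
      1 - ∑ i ∈ s, Real.exp (-(lam i) * t) * ∏ j ∈ s.erase i, lam j / (lam j - lam i) := by
  intro s
  induction s using Finset.induction_on with
  | empty =>
    intro t ht
    simp [ht]
  | @insert a s ha IH =>
    intro t ht
    set Y : Ω → ℝ := fun ω => ∑ i ∈ s, X i ω with hY
    have hYmeas : Measurable Y := Finset.measurable_sum s fun i _ => hXmeas i
    set c : Fin N → ℝ := fun i => ∏ j ∈ s.erase i, lam j / (lam j - lam i) with hc
    set F : ℝ → ℝ := fun u => 1 - ∑ i ∈ s, Real.exp (-(lam i) * u) * c i with hF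
    have hFeq : ∀ u : ℝ, 0 ≤ u → (ℙ {ω | Y ω ≤ u}).toReal = F u := fun u hu => IH u hu
    have hFnn : ∀ u, 0 ≤ u → 0 ≤ F u := fun u hu => (hFeq u hu) ▸ ENNReal.toReal_nonneg
    -- law of Y on Iic, nonneg side
    have hYlaw : ∀ u : ℝ, 0 ≤ u → Measure.map Y ℙ (Set.Iic u) = ENNReal.ofReal (F u) := by
      intro u hu
      rw [Measure.map_apply hYmeas measurableSet_Iic]
      have h1 : Y ⁻¹' Set.Iic u = {ω | Y ω ≤ u} := rfl
      rw [h1, ← ENNReal.ofReal_toReal (measure_ne_top ℙ {ω | Y ω ≤ u}), hFeq u hu]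
    -- negative side
    have hXnn : ∀ i : Fin N, ℙ {ω | X i ω < 0} = 0 := by
      intro i
      have h1 : {ω | X i ω < 0} = X i ⁻¹' (Set.Iio 0) := rfl
      rw [h1, ← Measure.map_apply (hXmeas i) measurableSet_Iio, hXdist i]
      show (Measure.withDensity volume (exponentialPDF (lam i))) (Set.Iio 0) = 0
      rw [withDensity_apply _ measurableSet_Iio]
      exact lintegral_exponentialPDF_of_nonpos le_rfl
    have hYneg : ∀ u : ℝ, u < 0 → Measure.map Y ℙ (Set.Iic u) = 0 := by
      intro u hu
      rw [Measure.map_apply hYmeas measurableSet_Iic]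
      have hnull : ℙ (⋃ i ∈ (s : Set (Fin N)), {ω | X i ω < 0}) = 0 :=
        (measure_biUnion_null_iff (s : Set (Fin N)).to_countable).mpr fun i _ => hXnn i
      refine measure_mono_null ?_ hnull
      intro ω hω
      by_contra hcon
      simp only [Set.mem_iUnion, Set.mem_setOf_eq, not_exists, not_lt, Finset.mem_coe] at hcon
      have h0 : 0 ≤ Y ω := Finset.sum_nonneg fun i hi => hcon i hi
      have : Y ω ≤ u := hω
      linarith
    -- independence
    have hZY : IndepFun (X a) Y ℙ := by
      have h := (hXindep.indepFun_finsetSum_of_notMem hXmeas ha).symm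
      have h2 : (∑ j ∈ s, X j) = Y := by funext ω; simp [hY, Finset.sum_apply]
      rwa [h2] at h
    have hmap : Measure.map (fun ω => (X a ω, Y ω)) ℙ
        = (expMeasure (lam a)).prod (Measure.map Y ℙ) := by
      rw [← hXdist a]
      exact (indepFun_iff_map_prod_eq_prod_map_map (hXmeas a).aemeasurable
        hYmeas.aemeasurable).mp hZY
    have hSmeas : MeasurableSet {p : ℝ × ℝ | p.1 + p.2 ≤ t} :=
      measurableSet_le (measurable_fst.add measurable_snd) measurable_const
    have key : ℙ {ω | ∑ i ∈ insert a s, X i ω ≤ t}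
        = ∫⁻ z, Measure.map Y ℙ (Set.Iic (t - z)) ∂(expMeasure (lam a)) := by
      have hsetEq : {ω | ∑ i ∈ insert a s, X i ω ≤ t}
          = (fun ω => (X a ω, Y ω)) ⁻¹' {p : ℝ × ℝ | p.1 + p.2 ≤ t} := by
        ext ω
        simp [Finset.sum_insert ha, hY]
      rw [hsetEq, ← Measure.map_apply ((hXmeas a).prodMk hYmeas) hSmeas, hmap,
        Measure.prod_apply hSmeas]
      refine lintegral_congr fun z => ?_
      congr 1
      ext y
      simp only [Set.mem_preimage, Set.mem_setOf_eq, Set.mem_Iic]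
      exact le_sub_iff_add_le'.symm
    set G : ℝ → ℝ := Set.indicator (Set.Ioc 0 t)
      (fun z => lam a * Real.exp (-(lam a) * z) * F (t - z)) with hG
    have key2 : ℙ {ω | ∑ i ∈ insert a s, X i ω ≤ t} = ∫⁻ z, ENNReal.ofReal (G z) := by
      rw [key]
      have hexp : expMeasure (lam a) = volume.withDensity (exponentialPDF (lam a)) := rfl
      have hpdfmeas : Measurable (exponentialPDF (lam a)) :=
        (measurable_exponentialPDFReal (lam a)).ennreal_ofReal
      have hpdffin : ∀ᵐ z : ℝ, exponentialPDF (lam a) z < ⊤ := by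
        refine Filter.Eventually.of_forall fun z => ?_
        rw [exponentialPDF]
        exact ENNReal.ofReal_lt_top
      rw [hexp, lintegral_withDensity_eq_lintegral_mul_non_measurable volume hpdfmeas hpdffin]
      refine lintegral_congr_ae ?_
      have hsing : (volume : Measure ℝ) {(0:ℝ)} = 0 := Real.volume_singleton
      filter_upwards [compl_mem_ae_iff.mpr hsing] with z hz
      have hz0 : z ≠ 0 := fun h => hz (by simp [Set.mem_singleton_iff, h])
      simp only [Pi.mul_apply]
      rcases lt_trichotomy z 0 with h | h | h
      · rw [exponentialPDF_of_neg h, zero_mul, hG,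
          Set.indicator_of_notMem (by simp [Set.mem_Ioc]; intro h'; linarith)]
        simp
      · exact absurd h hz0
      · rw [exponentialPDF_of_nonneg h.le]
        by_cases hzt : z ≤ t
        · rw [hYlaw (t - z) (by linarith), hG, Set.indicator_of_mem
            (Set.mem_Ioc.mpr ⟨h, hzt⟩), ← ENNReal.ofReal_mul
            (mul_nonneg (hlam a).le (Real.exp_pos _).le)]
          congr 2
          ring
        · rw [hYneg (t - z) (by linarith), mul_zero, hG,
            Set.indicator_of_notMem (by simp [Set.mem_Ioc]; intro h'; linarith)]
          simp
    have hFcont : Continuous F := by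
      refine continuous_const.sub (continuous_finset_sum s fun i _ => ?_)
      exact (Real.continuous_exp.comp (continuous_const.mul continuous_id)).mul continuous_const
    have hGnn : ∀ z, 0 ≤ G z := by
      intro z
      refine Set.indicator_nonneg (fun z hz => ?_) z
      have : (0:ℝ) ≤ t - z := by simp only [Set.mem_Ioc] at hz; linarith [hz.2]
      exact mul_nonneg (mul_nonneg (hlam a).le (Real.exp_pos _).le) (hFnn _ this)
    have hGint : Integrable G := by
      rw [hG, integrable_indicator_iff measurableSet_Ioc]
      exact (((continuous_const.mul ((Real.continuous_exp.comp
        (continuous_const.mul continuous_id)))).mul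
        (hFcont.comp (continuous_const.sub continuous_id)))).integrableOn_Ioc
    have key3 : (ℙ {ω | ∑ i ∈ insert a s, X i ω ≤ t}).toReal = ∫ z, G z := by
      rw [key2, ← ofReal_integral_eq_lintegral_ofReal hGint
        (Filter.Eventually.of_forall hGnn), ENNReal.toReal_ofReal
        (integral_nonneg hGnn)]
    rw [key3]
    have hint : ∫ z, G z = ∫ z in (0:ℝ)..t, lam a * Real.exp (-(lam a) * z) * F (t - z) := by
      rw [hG, integral_indicator measurableSet_Ioc, intervalIntegral.integral_of_le ht]
    have hexpand : ∀ z : ℝ, lam a * Real.exp (-(lam a) * z) * F (t - z)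
        = lam a * Real.exp (-(lam a) * z)
          - ∑ i ∈ s, (c i * lam a * Real.exp (-(lam i) * t)) * Real.exp ((lam i - lam a) * z) := by
      intro z
      rw [hF]
      simp only
      rw [mul_sub, mul_one, Finset.mul_sum]
      congr 1
      refine Finset.sum_congr rfl fun i _ => ?_
      rw [show -(lam i) * (t - z) = -(lam i) * t + lam i * z by ring, Real.exp_add]
      rw [show (lam i - lam a) * z = lam i * z + -(lam a) * z by ring, Real.exp_add]
      ring
    have hci : Continuous fun z : ℝ => lam a * Real.exp (-(lam a) * z) :=
      continuous_const.mul (Real.continuous_exp.comp (continuous_const.mul continuous_id))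
    have hci2 : ∀ i : Fin N, Continuous fun z : ℝ =>
        (c i * lam a * Real.exp (-(lam i) * t)) * Real.exp ((lam i - lam a) * z) :=
      fun i => continuous_const.mul (Real.continuous_exp.comp (continuous_const.mul continuous_id))
    have hint2 : (∫ z in (0:ℝ)..t, lam a * Real.exp (-(lam a) * z) * F (t - z))
        = (1 - Real.exp (-(lam a) * t)) - ∑ i ∈ s, (c i * lam a * Real.exp (-(lam i) * t))
            * ((Real.exp ((lam i - lam a) * t) - 1) / (lam i - lam a)) := by
      simp only [hexpand]
      rw [intervalIntegral.integral_sub (hci.intervalIntegrable 0 t)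
        ((continuous_finset_sum s fun i _ => hci2 i).intervalIntegrable 0 t),
        intervalIntegral.integral_finset_sum fun i _ => (hci2 i).intervalIntegrable 0 t]
      congr 1
      · rw [intervalIntegral.integral_const_mul,
          integral_exp_mul' (-(lam a)) (neg_ne_zero.mpr (hlam a).ne') t]
        have h0 : lam a ≠ 0 := (hlam a).ne'
        rw [div_neg, mul_neg, mul_div_assoc', mul_comm, mul_div_assoc, div_self h0, mul_one]
        ring
      · refine Finset.sum_congr rfl fun i hi => ?_
        rw [intervalIntegral.integral_const_mul, integral_exp_mul' (lam i - lam a)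
          (sub_ne_zero.mpr (hdistinct i a (ne_of_mem_of_not_mem hi ha))) t]
    rw [hint, hint2]
    rw [Finset.sum_insert ha, Finset.erase_insert ha]
    have hInjOn : Set.InjOn lam ((insert a s : Finset (Fin N)) : Set (Fin N)) := by
      intro i _ j _ h
      by_contra hne
      exact hdistinct i j hne h
    have hkp : ∏ j ∈ s, lam j / (lam j - lam a)
        = 1 - ∑ i ∈ s, lam a / (lam a - lam i) * c i := key_prod s lam a ha hInjOn
    have hprodrw : ∀ i ∈ s, Real.exp (-(lam i) * t)
          * ∏ j ∈ (insert a s).erase i, lam j / (lam j - lam i)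
        = Real.exp (-(lam i) * t) * (lam a / (lam a - lam i) * c i) := by
      intro i hi
      rw [Finset.erase_insert_of_ne (fun hia : a = i => ha (hia ▸ hi)),
        Finset.prod_insert (fun hmem => ha (Finset.mem_of_mem_erase hmem))]
    rw [Finset.sum_congr rfl hprodrw, hkp]
    have hterm : ∀ i ∈ s, (c i * lam a * Real.exp (-(lam i) * t))
          * ((Real.exp ((lam i - lam a) * t) - 1) / (lam i - lam a))
        = Real.exp (-(lam i) * t) * (lam a / (lam a - lam i) * c i)
          - Real.exp (-(lam a) * t) * (lam a / (lam a - lam i) * c i) := by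
      intro i hi
      have hia : lam i ≠ lam a := hdistinct i a (ne_of_mem_of_not_mem hi ha)
      have h1 : lam i - lam a ≠ 0 := sub_ne_zero.mpr hia
      have h2 : lam a - lam i ≠ 0 := sub_ne_zero.mpr (Ne.symm hia)
      have hE : Real.exp (-(lam a) * t) = Real.exp (-(lam i) * t)
          * Real.exp ((lam i - lam a) * t) := by
        rw [← Real.exp_add]
        congr 1
        ring
      rw [hE]
      field_simp
      ring
    rw [Finset.sum_congr rfl hterm, Finset.sum_sub_distrib, ← Finset.mul_sum]
    ring

/-- **Closed-form hypoexponential CDF for pairwise distinct rates.**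
If `X i ~ Exp(lam i)` are independent with pairwise distinct rates `lam i > 0`, then for all
`t ≥ 0`, `P(∑ Xᵢ ≤ t) = 1 - ∑ᵢ e^{-lamᵢ t} ∏_{j ≠ i} lamⱼ / (lamⱼ - lamᵢ)`. -/
theorem hypoexponential_cdf_closed_form
    {Ω : Type*} [MeasureSpace Ω] [IsProbabilityMeasure (ℙ : Measure Ω)]
    (n : ℕ) (hn : 1 ≤ n) (lam : Fin n → ℝ) (hlam : ∀ i, 0 < lam i)
    (hdistinct : ∀ i j, i ≠ j → lam i ≠ lam j)
    (X : Fin n → Ω → ℝ)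
    (hXmeas : ∀ i, Measurable (X i))
    (hXindep : iIndepFun X ℙ)
    (hXdist : ∀ i, Measure.map (X i) ℙ = expMeasure (lam i))
    (t : ℝ) (ht : 0 ≤ t) :
    (ℙ {ω | ∑ i, X i ω ≤ t}).toReal =
      1 - ∑ i, Real.exp (-(lam i) * t) *
        ∏ j ∈ Finset.univ.erase i, lam j / (lam j - lam i) := by
  exact hypo_aux lam hlam hdistinct X hXmeas hXindep hXdist Finset.univ t ht
end
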